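/- arXiv:0810.1735 — 8 statements merged into one kernel-verified Lean document; each statement's English description precedes it below -/
import Mathlib

section
/- In any graph G such that the subgraph induced by each color class of a given vertex partition (the 'input' partition) is co-P_3-free (i.e., complete multipartite), if S is a set of k > 1 pairwise nonadjacent vertices all adjacent to a common vertex v, and every edge of G is either an 'output edge' (both endpoints share the same output label, and vertices with the same output label form a clique) or an 'input edge', then at least k-1 vertices of S have the same input label as v. -/
/-- In a graph whose every edge is an "output edge" (endpoints with the same output
label, which form cliques) or an "input edge", and in which each input class induces a
complete multipartite (co-P₃-free) graph, if `S` is a set of `k > 1` pairwise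
nonadjacent vertices all adjacent to a common vertex `v`, then at least `k - 1`
vertices of `S` carry the same input label as `v`. -/
theorem stmt2 {V I O : Type*} [DecidableEq I] (G : SimpleGraph V)
    (inp : V → I) (out : V → O)
    (hedge : ∀ u w, G.Adj u w → out u = out w ∨ inp u = inp w)
    (hout : ∀ u w, u ≠ w → out u = out w → G.Adj u w)
    (hmultipartite : ¬ ∃ a b c : V, inp a = inp b ∧ inp b = inp c ∧
      a ≠ b ∧ a ≠ c ∧ b ≠ c ∧ G.Adj b c ∧ ¬ G.Adj a b ∧ ¬ G.Adj a c)
    (S : Finset V) (k : ℕ) (hk : 1 < k) (hcard : S.card = k)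
    (hstable : ∀ u ∈ S, ∀ w ∈ S, u ≠ w → ¬ G.Adj u w)
    (v : V) (hv : ∀ u ∈ S, G.Adj v u) :
    k - 1 ≤ (S.filter (fun u => inp u = inp v)).card := by
  classical
  have hT : (S.filter (fun u => ¬ inp u = inp v)).card ≤ 1 := by
    apply Finset.card_le_one.mpr
    intro a ha b hb
    simp only [Finset.mem_filter] at ha hb
    by_contra hab
    have hao : out v = out a := by
      rcases hedge v a (hv a ha.1) with h | h
      · exact h
      · exact absurd h.symm ha.2
    have hbo : out v = out b := by
      rcases hedge v b (hv b hb.1) with h | h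
      · exact h
      · exact absurd h.symm hb.2
    exact hstable a ha.1 b hb.1 hab (hout a b hab (hao ▸ hbo))
  have hsum := Finset.card_filter_add_card_filter_not
    (s := S) (p := fun u => inp u = inp v)
  omega
end

section
/- The webbed claw graph cannot occur as an induced subgraph of the enhanced conflict graph of any multicast switch traffic pattern. -/
/-- A subflow of a multicast traffic pattern: an input, a fanout set of outputs,
and a particular output in the fanout. -/
structure Subflow (I O : Type*) where
  inp : I
  fanout : Set O
  out : O
  mem : out ∈ fanout

/-- The enhanced conflict graph: two distinct subflows are adjacent iff they have
the same output, or the same input but different fanout sets. -/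
def enhancedConflictGraph (I O : Type*) : SimpleGraph (Subflow I O) where
  Adj a b := a ≠ b ∧ (a.out = b.out ∨ (a.inp = b.inp ∧ a.fanout ≠ b.fanout))
  symm := ⟨by
    rintro a b ⟨hne, h | ⟨h1, h2⟩⟩
    · exact ⟨hne.symm, Or.inl h.symm⟩
    · exact ⟨hne.symm, Or.inr ⟨h1.symm, h2.symm⟩⟩⟩
  loopless := ⟨by rintro a ⟨hne, _⟩; exact hne rfl⟩

/-- The webbed claw: vertices `0,…,5` with central vertex `4` adjacent to all
others, plus the edges `{0,1}` and `{2,3}`. -/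
def webbedClaw : SimpleGraph (Fin 6) :=
  SimpleGraph.fromRel (fun a b =>
    (a, b) ∈ [((0 : Fin 6), (1 : Fin 6)), (2, 3), (4, 0), (4, 1), (4, 2), (4, 3), (4, 5)])

/-- The webbed claw does not occur as an induced subgraph of the enhanced conflict
graph of any multicast switch traffic pattern. -/
theorem stmt3 {I O : Type*} :
    ¬ ∃ f : Fin 6 → Subflow I O, Function.Injective f ∧
      ∀ a b : Fin 6,
        (enhancedConflictGraph I O).Adj (f a) (f b) ↔ webbedClaw.Adj a b := by

  rintro ⟨f, hinj, hiff⟩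
  -- `P k` : subflow k shares the output of the center; `Q k` : shares input, different fanout
  have hne : ∀ a b : Fin 6, a ≠ b → f a ≠ f b := fun a b h e => h (hinj e)
  have adj : ∀ a b : Fin 6, webbedClaw.Adj a b →
      (f a).out = (f b).out ∨ ((f a).inp = (f b).inp ∧ (f a).fanout ≠ (f b).fanout) :=
    fun a b h => ((hiff a b).2 h).2
  have nadj : ∀ a b : Fin 6, a ≠ b → ¬ webbedClaw.Adj a b →
      (f a).out ≠ (f b).out ∧ ((f a).inp = (f b).inp → (f a).fanout = (f b).fanout) := by
    intro a b hab h
    have h2 := mt (hiff a b).1 h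
    simp only [enhancedConflictGraph] at h2
    push_neg at h2
    have h3 := h2 (hne a b hab)
    exact ⟨h3.1, fun hi => by
      by_contra hfan
      exact absurd hi (by tauto)⟩
  have ext : ∀ a b : Fin 6, (f a).inp = (f b).inp → (f a).fanout = (f b).fanout →
      (f a).out = (f b).out → f a = f b := by
    intro a b h1 h2 h3
    have : ∀ s t : Subflow I O, s.inp = t.inp → s.fanout = t.fanout → s.out = t.out →
        s = t := by
      rintro ⟨i1, J1, o1, m1⟩ ⟨i2, J2, o2, m2⟩ g1 g2 g3
      simp_all
    exact this _ _ h1 h2 h3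
  -- the two kinds of contradictions
  have keyP : ∀ a b : Fin 6, a ≠ b → ¬ webbedClaw.Adj a b →
      (f 4).out = (f a).out → (f 4).out = (f b).out → False := by
    intro a b hab h pa pb
    exact (nadj a b hab h).1 (pa ▸ pb)
  have keyQ : ∀ a b c : Fin 6, webbedClaw.Adj a b → a ≠ c → b ≠ c →
      ¬ webbedClaw.Adj a c → ¬ webbedClaw.Adj b c →
      ((f 4).inp = (f a).inp ∧ (f 4).fanout ≠ (f a).fanout) →
      ((f 4).inp = (f b).inp ∧ (f 4).fanout ≠ (f b).fanout) →
      ((f 4).inp = (f c).inp ∧ (f 4).fanout ≠ (f c).fanout) → False := by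
    intro a b c hab hac hbc hnac hnbc qa qb qc
    have hiab : (f a).inp = (f b).inp := qa.1.symm.trans qb.1
    have hfac : (f a).fanout = (f c).fanout :=
      (nadj a c hac hnac).2 (qa.1.symm.trans qc.1)
    have hfbc : (f b).fanout = (f c).fanout :=
      (nadj b c hbc hnbc).2 (qb.1.symm.trans qc.1)
    have hfab : (f a).fanout = (f b).fanout := hfac.trans hfbc.symm
    have hout : (f a).out = (f b).out := by
      rcases adj a b hab with h | h
      · exact h
      · exact absurd hfab h.2
    exact hne a b hab.ne (ext a b hiab hfab hout)
  have h0 := adj 4 0 (by simp [webbedClaw, SimpleGraph.fromRel_adj])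
  have h1 := adj 4 1 (by simp [webbedClaw, SimpleGraph.fromRel_adj])
  have h2 := adj 4 2 (by simp [webbedClaw, SimpleGraph.fromRel_adj])
  have h3 := adj 4 3 (by simp [webbedClaw, SimpleGraph.fromRel_adj])
  have h5 := adj 4 5 (by simp [webbedClaw, SimpleGraph.fromRel_adj])
  have e01 : webbedClaw.Adj 0 1 := by simp [webbedClaw, SimpleGraph.fromRel_adj]
  have e23 : webbedClaw.Adj 2 3 := by simp [webbedClaw, SimpleGraph.fromRel_adj]
  have n02 : ¬ webbedClaw.Adj 0 2 := by simp [webbedClaw, SimpleGraph.fromRel_adj]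
  have n03 : ¬ webbedClaw.Adj 0 3 := by simp [webbedClaw, SimpleGraph.fromRel_adj]
  have n05 : ¬ webbedClaw.Adj 0 5 := by simp [webbedClaw, SimpleGraph.fromRel_adj]
  have n12 : ¬ webbedClaw.Adj 1 2 := by simp [webbedClaw, SimpleGraph.fromRel_adj]
  have n13 : ¬ webbedClaw.Adj 1 3 := by simp [webbedClaw, SimpleGraph.fromRel_adj]
  have n15 : ¬ webbedClaw.Adj 1 5 := by simp [webbedClaw, SimpleGraph.fromRel_adj]
  have n25 : ¬ webbedClaw.Adj 2 5 := by simp [webbedClaw, SimpleGraph.fromRel_adj]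
  have n35 : ¬ webbedClaw.Adj 3 5 := by simp [webbedClaw, SimpleGraph.fromRel_adj]
  rcases h0 with p0 | q0 <;> rcases h1 with p1 | q1 <;> rcases h2 with p2 | q2 <;>
    rcases h3 with p3 | q3 <;> rcases h5 with p5 | q5 <;>
  first
    | exact keyP 0 2 (by decide) n02 p0 p2
    | exact keyP 0 3 (by decide) n03 p0 p3
    | exact keyP 0 5 (by decide) n05 p0 p5
    | exact keyP 1 2 (by decide) n12 p1 p2
    | exact keyP 1 3 (by decide) n13 p1 p3
    | exact keyP 1 5 (by decide) n15 p1 p5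
    | exact keyP 2 5 (by decide) n25 p2 p5
    | exact keyP 3 5 (by decide) n35 p3 p5
    | exact keyQ 0 1 5 e01 (by decide) (by decide) n05 n15 q0 q1 q5
    | exact keyQ 2 3 5 e23 (by decide) (by decide) n25 n35 q2 q3 q5
    | exact keyQ 0 1 2 e01 (by decide) (by decide) n02 n12 q0 q1 q2
end

section
/- The Replication Lemma for perfect graphs: if G = (V,E) is perfect and v ∈ V, and G' is obtained by adding a new vertex v' adjacent to v and to all neighbors of v, then G' is perfect. -/
/-- A graph is perfect if for every induced subgraph the chromatic number equals
the clique number. -/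
def SimpleGraph.IsPerfect {V : Type*} (G : SimpleGraph V) : Prop :=
  ∀ s : Set V, (G.induce s).chromaticNumber = ((G.induce s).cliqueNum : ℕ∞)

/-- The graph obtained from `G` by replicating the vertex `v`: the new vertex
(`none`) is joined to `v` and to all neighbours of `v`. -/
def SimpleGraph.replicate {V : Type*} (G : SimpleGraph V) (v : V) :
    SimpleGraph (Option V) where
  Adj a b :=
    match a, b with
    | some x, some y => G.Adj x y
    | some x, none => x = v ∨ G.Adj x v
    | none, some y => y = v ∨ G.Adj y v
    | none, none => False
  symm := by
    refine ⟨?_⟩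
    rintro (_ | x) (_ | y) h
    · exact h
    · exact h
    · exact h
    · exact h.symm
  loopless := by
    refine ⟨?_⟩
    rintro (_ | x) h
    · exact h
    · exact G.loopless.irrefl x h

namespace SimpleGraph

section Helpers
variable {α β : Type*} {G : SimpleGraph α} {H : SimpleGraph β}

lemma IsNClique.map_emb (f : G ↪g H) {n : ℕ} {K : Finset α}
    (h : G.IsNClique n K) : H.IsNClique n (K.map f.toEmbedding) := by
  constructor
  · rw [Finset.coe_map]
    rintro _ ⟨a, ha, rfl⟩ _ ⟨b, hb, rfl⟩ hne
    exact f.map_rel_iff.mpr (h.1 ha hb (by rintro rfl; exact hne rfl))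
  · simp [h.2]

lemma cliqueNum_eq_of_iso' (e : G ≃g H) : G.cliqueNum = H.cliqueNum := by
  unfold cliqueNum
  congr 1
  ext k
  constructor
  · rintro ⟨K, hK⟩; exact ⟨_, hK.map_emb e.toEmbedding⟩
  · rintro ⟨K, hK⟩; exact ⟨_, hK.map_emb e.symm.toEmbedding⟩

lemma chromaticNumber_eq_of_iso' (e : G ≃g H) :
    G.chromaticNumber = H.chromaticNumber :=
  le_antisymm (chromaticNumber_mono_of_hom e.toEmbedding.toHom)
    (chromaticNumber_mono_of_hom e.symm.toEmbedding.toHom)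

lemma perfect_transfer {s : Set α} (e : G.induce s ≃g H)
    (h : (G.induce s).chromaticNumber = ((G.induce s).cliqueNum : ℕ∞)) :
    H.chromaticNumber = (H.cliqueNum : ℕ∞) := by
  rw [← chromaticNumber_eq_of_iso' e, ← cliqueNum_eq_of_iso' e, h]

end Helpers

variable {V : Type*}

/-- Case A equiv -/
def replicateEquivA {s : Set (Option V)} (hnone : none ∉ s) :
    {x : V | some x ∈ s} ≃ s where
  toFun x := ⟨some x.1, x.2⟩
  invFun o := match o with
    | ⟨some x, h⟩ => ⟨x, h⟩
    | ⟨none, h⟩ => absurd h hnone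
  left_inv x := rfl
  right_inv := by rintro ⟨(_ | x), h⟩ <;> first | exact absurd h hnone | rfl

def replicateIsoA (G : SimpleGraph V) (v : V) {s : Set (Option V)} (hnone : none ∉ s) :
    G.induce {x : V | some x ∈ s} ≃g (G.replicate v).induce s where
  toEquiv := replicateEquivA hnone
  map_rel_iff' := Iff.rfl

/-- Case B equiv : none ∈ s, some v ∉ s -/
noncomputable def replicateEquivB {v : V} {s : Set (Option V)} (hnone : none ∈ s)
    (hv : some v ∉ s) :
    s ≃ (insert v {x : V | some x ∈ s} : Set V) :=
  Equiv.ofBijective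
    (fun o => match o with
      | ⟨some x, h⟩ => ⟨x, Set.mem_insert_iff.mpr (Or.inr h)⟩
      | ⟨none, _⟩ => ⟨v, Set.mem_insert v _⟩)
    (by
      constructor
      · rintro ⟨(_ | x), hx⟩ ⟨(_ | y), hy⟩ h
        · rfl
        · simp only [Subtype.mk.injEq] at h; subst h; exact absurd hy hv
        · simp only [Subtype.mk.injEq] at h; subst h; exact absurd hx hv
        · simp only [Subtype.mk.injEq] at h; subst h; rfl
      · rintro ⟨x, hx⟩
        rcases Set.mem_insert_iff.mp hx with rfl | hx'
        · exact ⟨⟨none, hnone⟩, rfl⟩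
        · exact ⟨⟨some x, hx'⟩, rfl⟩)

noncomputable def replicateIsoB (G : SimpleGraph V) (v : V) {s : Set (Option V)}
    (hnone : none ∈ s) (hv : some v ∉ s) :
    (G.replicate v).induce s ≃g G.induce (insert v {x : V | some x ∈ s}) where
  toEquiv := replicateEquivB hnone hv
  map_rel_iff' := by
    rintro ⟨(_ | x), hx⟩ ⟨(_ | y), hy⟩
    · show G.Adj v v ↔ (G.replicate v).Adj none none
      simp [replicate]
    · show G.Adj v y ↔ (G.replicate v).Adj none (some y)
      have hne : y ≠ v := fun h => hv (h ▸ hy)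
      constructor
      · exact fun h => Or.inr h.symm
      · rintro (rfl | h)
        · exact absurd rfl hne
        · exact h.symm
    · show G.Adj x v ↔ (G.replicate v).Adj (some x) none
      have hne : x ≠ v := fun h => hv (h ▸ hx)
      constructor
      · exact fun h => Or.inr h
      · rintro (rfl | h)
        · exact absurd rfl hne
        · exact h
    · exact Iff.rfl

end SimpleGraph
namespace SimpleGraph
variable {V : Type*}

lemma replicate_caseC (G : SimpleGraph V) (v : V) (hG : G.IsPerfect)
    (s : Set (Option V)) (hnone : none ∈ s) (hv : some v ∈ s) :
    ((G.replicate v).induce s).chromaticNumber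
      = (((G.replicate v).induce s).cliqueNum : ℕ∞) := by
  classical
  set t : Set V := {x | some x ∈ s} with ht
  have hvt : v ∈ t := hv
  set H := (G.replicate v).induce s with hH
  set Gt := G.induce t with hGt
  set n := Gt.cliqueNum with hn
  have hχ : Gt.chromaticNumber = (n : ℕ∞) := hG t
  have hcol : Gt.Colorable n := chromaticNumber_le_iff_colorable.mp hχ.le
  -- the embedding of Gt into H
  let j : Gt ↪g H := ⟨⟨fun x => ⟨some x.1, x.2⟩, by
      rintro ⟨x, hx⟩ ⟨y, hy⟩ h
      simp only [Subtype.mk.injEq, Option.some.injEq] at h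
      exact Subtype.ext h⟩, Iff.rfl⟩
  -- the projection from H's vertices to Gt's vertices
  let p : ↥s → ↥t := fun o => match o with
    | ⟨some x, h⟩ => ⟨x, h⟩
    | ⟨none, _⟩ => ⟨v, hvt⟩
  -- every clique in H has size at most n+1
  have hbH : ∀ {m : ℕ} {K : Finset ↥s}, H.IsNClique m K → m ≤ n + 1 := by
    intro m K hK
    set K' : Finset ↥s := K.erase ⟨none, hnone⟩ with hK'
    have hsome : ∀ a ∈ K', ∃ (x : V) (hx : x ∈ t), a = ⟨some x, hx⟩ := by
      intro a ha
      obtain ⟨⟨(_ | x), hxa⟩, rfl⟩ : ∃ b : ↥s, b = a := ⟨a, rfl⟩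
      · exact absurd rfl (Finset.ne_of_mem_erase ha)
      · exact ⟨x, hxa, rfl⟩
    have hinj : Set.InjOn p ↑K' := by
      intro a ha b hb hab
      obtain ⟨x, hx, rfl⟩ := hsome a ha
      obtain ⟨y, hy, rfl⟩ := hsome b hb
      simp only [p, Subtype.mk.injEq] at hab
      simp [hab]
    have hclique : Gt.IsClique ↑(K'.image p) := by
      rw [Finset.coe_image]
      rintro _ ⟨a, ha, rfl⟩ _ ⟨b, hb, rfl⟩ hne
      obtain ⟨x, hx, rfl⟩ := hsome a ha
      obtain ⟨y, hy, rfl⟩ := hsome b hb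
      have hxy : (⟨some x, hx⟩ : ↥s) ≠ ⟨some y, hy⟩ := by
        rintro h; exact hne (congrArg p h)
      exact hK.1 (Finset.mem_of_mem_erase ha) (Finset.mem_of_mem_erase hb) hxy
    have hcard : K'.card ≤ n := by
      rw [← Finset.card_image_of_injOn hinj]
      exact hclique.card_le_of_colorable hcol
    have : K.card ≤ K'.card + 1 := by
      rcases em ((⟨none, hnone⟩ : ↥s) ∈ K) with h | h
      · rw [hK', Finset.card_erase_of_mem h]; omega
      · rw [hK', Finset.erase_eq_of_notMem h]; omega
    have hKm : K.card = m := hK.2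
    omega
  have hne0 : {m : ℕ | ∃ K, H.IsNClique m K}.Nonempty :=
    ⟨0, ∅, isNClique_empty.mpr rfl⟩
  have hbddH : BddAbove {m : ℕ | ∃ K, H.IsNClique m K} :=
    ⟨n + 1, by rintro m ⟨K, hK⟩; exact hbH hK⟩
  set m := H.cliqueNum with hm
  have hmK : m ∈ {m : ℕ | ∃ K, H.IsNClique m K} := Nat.sSup_mem hne0 hbddH
  have hm_le : m ≤ n + 1 := csSup_le hne0 (by rintro k ⟨K, hK⟩; exact hbH hK)
  -- cliques in Gt are bounded, and a maximum one exists
  have hbddGt : BddAbove {k : ℕ | ∃ K, Gt.IsNClique k K} :=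
    ⟨n, by rintro k ⟨K, hK⟩; exact hK.2 ▸ hK.1.card_le_of_colorable hcol⟩
  have hKn : n ∈ {k : ℕ | ∃ K, Gt.IsNClique k K} :=
    Nat.sSup_mem ⟨0, ∅, isNClique_empty.mpr rfl⟩ hbddGt
  have hn_le : n ≤ m := by
    obtain ⟨K, hK⟩ := hKn
    exact le_csSup hbddH ⟨K.map j.toEmbedding, hK.map_emb j⟩
  -- lower bound for the chromatic number
  have hlow : (m : ℕ∞) ≤ H.chromaticNumber := by
    obtain ⟨K, hK⟩ := hmK
    have := hK.1.card_le_chromaticNumber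
    rwa [hK.2] at this
  -- upper bound
  have hup : H.chromaticNumber ≤ (m : ℕ∞) := by
    rcases eq_or_lt_of_le hm_le with hmn | hmn
    · -- m = n + 1 : easy coloring with a fresh color
      obtain ⟨c⟩ := hcol
      have C : H.Coloring (Option (Fin n)) := Coloring.mk
        (fun o => match o with
          | ⟨some x, h⟩ => some (c ⟨x, h⟩)
          | ⟨none, _⟩ => none)
        (by
          rintro ⟨(_ | x), hx⟩ ⟨(_ | y), hy⟩ hadj
          · exact (H.loopless.irrefl _ hadj).elim
          · simp
          · simp
          · simp only [ne_eq, Option.some.injEq]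
            exact c.valid hadj)
      have : H.Colorable (n + 1) := by
        have := C.colorable
        simpa using this
      rw [hmn]
      exact this.chromaticNumber_le
    · -- m = n
      have hmn' : m = n := by omega
      obtain ⟨c⟩ := hcol
      set c₀ := c ⟨v, hvt⟩ with hc₀
      set t' : Set V := insert v {x | ∃ h : x ∈ t, c ⟨x, h⟩ ≠ c₀} with ht'
      have ht't : t' ⊆ t := by
        rintro x (rfl | ⟨h, _⟩)
        · exact hvt
        · exact h
      set Gt' := G.induce t' with hGt'
      let incl : Gt' ↪g Gt := ⟨⟨Set.inclusion ht't, Set.inclusion_injective ht't⟩, Iff.rfl⟩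
      have hcol' : Gt'.Colorable n := Colorable.of_hom incl.toHom ⟨c⟩
      set k := Gt'.cliqueNum with hk
      have hχ' : Gt'.chromaticNumber = (k : ℕ∞) := hG t'
      have hbddGt' : BddAbove {l : ℕ | ∃ K, Gt'.IsNClique l K} :=
        ⟨n, by rintro l ⟨K, hK⟩; exact hK.2 ▸ hK.1.card_le_of_colorable hcol'⟩
      have hkK : k ∈ {l : ℕ | ∃ K, Gt'.IsNClique l K} :=
        Nat.sSup_mem ⟨0, ∅, isNClique_empty.mpr rfl⟩ hbddGt'
      have hk_le : k ≤ n := csSup_le ⟨0, ∅, isNClique_empty.mpr rfl⟩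
        (by rintro l ⟨K, hK⟩; exact hK.2 ▸ hK.1.card_le_of_colorable hcol')
      -- k ≠ n
      have hkn : k ≠ n := by
        intro hkn
        obtain ⟨K', hK'⟩ := hkK
        have hK : Gt.IsNClique n (K'.map incl.toEmbedding) := hkn ▸ hK'.map_emb incl
        set K := K'.map incl.toEmbedding with hKdef
        -- c is injective on K, hence surjective onto Fin n, hence v ∈ K
        have hinjK : Set.InjOn c ↑K := by
          intro a ha b hb hab
          by_contra hab'
          exact c.valid (hK.1 ha hb hab') hab
        have himg : K.image c = Finset.univ := by
          apply Finset.eq_univ_of_card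
          rw [Finset.card_image_of_injOn hinjK, hK.2, Fintype.card_fin]
        have hc₀mem : c₀ ∈ K.image c := himg ▸ Finset.mem_univ c₀
        obtain ⟨a, haK, hac⟩ := Finset.mem_image.mp hc₀mem
        obtain ⟨a', ha'K', rfl⟩ := Finset.mem_map.mp haK
        have hav : (incl.toEmbedding a' : ↥t) = ⟨v, hvt⟩ := by
          rcases Set.mem_insert_iff.mp a'.2 with h | ⟨h, hne⟩
          · exact Subtype.ext h
          · exfalso
            apply hne
            have heq : (⟨(a' : V), h⟩ : ↥t) = incl.toEmbedding a' := Subtype.ext rfl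
            rw [heq, hac]
        have hvK : (⟨v, hvt⟩ : ↥t) ∈ K := hav ▸ haK
        -- build an (n+1)-clique in H
        have hnoneK : (⟨none, hnone⟩ : ↥s) ∉ K.map j.toEmbedding := by
          simp only [Finset.mem_map]
          rintro ⟨b, -, hb⟩
          exact Option.some_ne_none _ (congrArg Subtype.val hb)
        have hclique : H.IsNClique (n + 1)
            (insert (⟨none, hnone⟩ : ↥s) (K.map j.toEmbedding)) := by
          constructor
          · rw [Finset.coe_insert]
            refine (hK.map_emb j).1.insert ?_
            rintro b hb hne
            obtain ⟨b', hb'K, rfl⟩ := Finset.mem_map.mp hb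
            show (b' : V) = v ∨ G.Adj (b' : V) v
            rcases eq_or_ne b' ⟨v, hvt⟩ with rfl | hbv
            · exact Or.inl rfl
            · exact Or.inr (hK.1 hb'K hvK hbv)
          · rw [Finset.card_insert_of_notMem hnoneK, Finset.card_map, hK.2]
        have : n + 1 ≤ m := le_csSup hbddH ⟨_, hclique⟩
        omega
      -- color H with k+1 ≤ n colors
      have hcol'' : Gt'.Colorable k := chromaticNumber_le_iff_colorable.mp hχ'.le
      obtain ⟨d⟩ := hcol''
      have hmemt' : ∀ (x : V) (hx : x ∈ t), x ∉ t' → c ⟨x, hx⟩ = c₀ := by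
        intro x hx hxt'
        by_contra hne
        exact hxt' (Set.mem_insert_iff.mpr (Or.inr ⟨hx, hne⟩))
      have C : H.Coloring (Option (Fin k)) := Coloring.mk
        (fun o => match o with
          | ⟨some x, h⟩ => if hx : x ∈ t' then some (d ⟨x, hx⟩) else none
          | ⟨none, _⟩ => none)
        (by
          rintro ⟨(_ | x), hx⟩ ⟨(_ | y), hy⟩ hadj
          · exact (H.loopless.irrefl _ hadj).elim
          · -- none, some y;  hadj : y = v ∨ G.Adj y v
            have hyt' : y ∈ t' := by
              rcases hadj with rfl | hadj
              · exact Set.mem_insert _ _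
              · by_contra hyt'
                have h1 : c ⟨y, hy⟩ = c₀ := hmemt' y hy hyt'
                exact c.valid (show Gt.Adj ⟨y, hy⟩ ⟨v, hvt⟩ from hadj) (h1.trans hc₀)
            simp [hyt']
          · -- some x, none
            have hxt' : x ∈ t' := by
              rcases hadj with rfl | hadj
              · exact Set.mem_insert _ _
              · by_contra hxt'
                have h1 : c ⟨x, hx⟩ = c₀ := hmemt' x hx hxt'
                exact c.valid (show Gt.Adj ⟨x, hx⟩ ⟨v, hvt⟩ from hadj) h1
            simp [hxt']
          · -- some x, some y; hadj : G.Adj x y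
            by_cases hxt' : x ∈ t' <;> by_cases hyt' : y ∈ t'
            · have : Gt'.Adj ⟨x, hxt'⟩ ⟨y, hyt'⟩ := hadj
              simp only [dif_pos hxt', dif_pos hyt', ne_eq, Option.some.injEq]
              exact d.valid this
            · simp [hxt', hyt']
            · simp [hxt', hyt']
            · exfalso
              have h1 : c ⟨x, hx⟩ = c₀ := hmemt' x hx hxt'
              have h2 : c ⟨y, hy⟩ = c₀ := hmemt' y hy hyt'
              exact c.valid (show Gt.Adj ⟨x, hx⟩ ⟨y, hy⟩ from hadj) (h1.trans h2.symm))
      have hHcol : H.Colorable (k + 1) := by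
        have := C.colorable
        simpa using this
      calc H.chromaticNumber ≤ ((k + 1 : ℕ) : ℕ∞) := hHcol.chromaticNumber_le
        _ ≤ (m : ℕ∞) := by
            rw [hmn']
            exact_mod_cast Nat.succ_le_of_lt (lt_of_le_of_ne hk_le hkn)
  exact le_antisymm hup hlow

end SimpleGraph

/-- The Replication Lemma: replicating a vertex of a perfect graph yields a
perfect graph. -/
theorem stmt9 {V : Type*} (G : SimpleGraph V) (v : V) (hG : G.IsPerfect) :
    (G.replicate v).IsPerfect := by
  intro s
  by_cases hnone : none ∈ s
  · by_cases hv : some v ∈ s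
    · exact SimpleGraph.replicate_caseC G v hG s hnone hv
    · exact SimpleGraph.perfect_transfer (SimpleGraph.replicateIsoB G v hnone hv).symm (hG _)
  · exact SimpleGraph.perfect_transfer (SimpleGraph.replicateIsoA G v hnone) (hG _)
end

section
/- If every vertex of a graph G can be covered exactly q times by a family of p induced perfect subgraphs of G, then the imperfection ratio of G is at most p/q. -/
open Pointwise

/-- The stable set polytope `STAB(G)`: the convex hull of the incidence vectors
of stable sets of `G`. -/
def stabPolytope {V : Type*} (G : SimpleGraph V) : Set (V → ℝ) :=
  convexHull ℝ {x | ∃ s : Finset V,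
    (∀ u ∈ s, ∀ w ∈ s, ¬ G.Adj u w) ∧ x = Set.indicator (↑s) (fun _ => (1 : ℝ))}

/-- The fractional stable set polytope `QSTAB(G)`: nonnegativity together with
the clique inequalities. -/
def qstab {V : Type*} (G : SimpleGraph V) : Set (V → ℝ) :=
  {x | (∀ v, 0 ≤ x v) ∧
    ∀ Q : Finset V, (∀ u ∈ Q, ∀ w ∈ Q, u ≠ w → G.Adj u w) → ∑ v ∈ Q, x v ≤ 1}

/-- The imperfection ratio `imp(G) = min { t : QSTAB(G) ⊆ t · STAB(G) }`. -/
noncomputable def impRatio {V : Type*} (G : SimpleGraph V) : ℝ :=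
  sInf {t : ℝ | qstab G ⊆ t • stabPolytope G}

lemma stable_decomp {W : Type*} [Fintype W] [DecidableEq W] (H : SimpleGraph W) (hH : H.IsPerfect) (N : ℕ) :
    ∀ (w : W → ℕ), ∑ v, w v = N → ∀ (n : ℕ),
    (∀ Q : Finset W, (∀ u ∈ Q, ∀ x ∈ Q, u ≠ x → H.Adj u x) → ∑ v ∈ Q, w v ≤ n) →
    ∃ f : Fin n → Finset W, (∀ i, ∀ u ∈ f i, ∀ x ∈ f i, ¬ H.Adj u x) ∧
      ∀ v, (Finset.univ.filter (fun i => v ∈ f i)).card = w v := by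
  classical
  induction N using Nat.strong_induction_on with
  | _ N ih =>
  intro w hw n hcl
  by_cases h01 : ∀ v, w v ≤ 1
  · -- base case: 0/1 weights, use perfection (χ = ω) of the induced support graph
    set s : Set W := {v | w v ≠ 0} with hs
    -- clique number of the induced graph is at most n
    have hω : (H.induce s).cliqueNum ≤ n := by
      obtain ⟨t, ht⟩ := SimpleGraph.exists_isNClique_cliqueNum (G := H.induce s)
      have hQ : ∀ u ∈ t.map ⟨Subtype.val, Subtype.val_injective⟩,
          ∀ x ∈ t.map ⟨Subtype.val, Subtype.val_injective⟩, u ≠ x → H.Adj u x := by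
        intro u hu x hx hne
        simp only [Finset.mem_map, Function.Embedding.coeFn_mk] at hu hx
        obtain ⟨u', hu', rfl⟩ := hu
        obtain ⟨x', hx', rfl⟩ := hx
        have := ht.1 hu' hx' (by simpa using fun h => hne (by rw [h]))
        exact this
      have hsum := hcl _ hQ
      have : ∑ v ∈ t.map ⟨Subtype.val, Subtype.val_injective⟩, w v
          = (t.map ⟨Subtype.val, Subtype.val_injective⟩).card := by
        rw [Finset.card_eq_sum_ones]
        apply Finset.sum_congr rfl
        intro v hv
        simp only [Finset.mem_map, Function.Embedding.coeFn_mk] at hv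
        obtain ⟨v', hv', rfl⟩ := hv
        have h1 : w (v' : W) ≠ 0 := v'.2
        have h2 : w (v' : W) ≤ 1 := h01 _
        omega
      rw [this, Finset.card_map] at hsum
      rwa [← ht.2]
    have hcol : (H.induce s).Colorable n := by
      rw [← SimpleGraph.chromaticNumber_le_iff_colorable, hH s]
      exact_mod_cast hω
    obtain ⟨C⟩ := hcol
    refine ⟨fun i => Finset.univ.filter (fun v => ∃ h : w v ≠ 0, C ⟨v, h⟩ = i), ?_, ?_⟩
    · intro i u hu x hx
      simp only [Finset.mem_filter] at hu hx
      obtain ⟨-, hu1, hu2⟩ := hu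
      obtain ⟨-, hx1, hx2⟩ := hx
      intro hadj
      rcases eq_or_ne u x with rfl | hne
      · exact H.irrefl hadj
      · exact C.valid (by simpa using hadj) (hu2.trans hx2.symm)
    · intro v
      rcases eq_or_ne (w v) 0 with h0 | h0
      · rw [h0]
        rw [Finset.card_eq_zero, Finset.filter_eq_empty_iff]
        rintro i - 
        simp only [Finset.mem_filter, Finset.mem_univ, true_and]
        rintro ⟨h, -⟩
        exact h h0
      · have h1 : w v = 1 := by have := h01 v; omega
        rw [h1]
        have hset : (Finset.univ.filter (fun i =>
            v ∈ Finset.univ.filter (fun v => ∃ h : w v ≠ 0, C ⟨v, h⟩ = i))) = {C ⟨v, h0⟩} := by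
          ext i
          simp only [Finset.mem_filter, Finset.mem_univ, true_and, Finset.mem_singleton]
          constructor
          · rintro ⟨h, rfl⟩; rfl
          · rintro rfl; exact ⟨h0, rfl⟩
        rw [hset, Finset.card_singleton]
  · -- inductive step: some vertex has weight ≥ 2
    push_neg at h01
    obtain ⟨v0, hv0⟩ := h01
    have hv0' : 2 ≤ w v0 := hv0
    -- n ≥ 2 because {v0} is a clique
    have hn2 : 2 ≤ n := by
      have h := hcl {v0} (by
        intro u hu x hx hne
        simp only [Finset.mem_singleton] at hu hx
        exact absurd (hu.trans hx.symm) hne)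
      simp only [Finset.sum_singleton] at h
      omega
    -- w' = w with one unit removed at v0
    set w' : W → ℕ := Function.update w v0 (w v0 - 1) with hw'
    have hw'le : ∀ v, w' v ≤ w v := by
      intro v
      rcases eq_or_ne v v0 with rfl | hne
      · simp [hw', Function.update_self]
      · simp [hw', Function.update_of_ne hne]
    have hw'v0 : w' v0 = w v0 - 1 := by simp [hw', Function.update_self]
    have hsum' : ∑ v, w' v < N := by
      rw [← hw]
      apply Finset.sum_lt_sum (fun i _ => hw'le i)
      exact ⟨v0, Finset.mem_univ _, by omega⟩
    obtain ⟨f', hf'stab, hf'cnt⟩ := ih _ hsum' w' rfl n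
      (fun Q hQ => le_trans (Finset.sum_le_sum (fun v _ => hw'le v)) (hcl Q hQ))
    -- v0 belongs to some f' k
    have hv0mem : ∃ k, v0 ∈ f' k := by
      have := hf'cnt v0
      rw [hw'v0] at this
      have hne : (Finset.univ.filter (fun i => v0 ∈ f' i)).Nonempty := by
        rw [← Finset.card_pos, this]; omega
      obtain ⟨k, hk⟩ := hne
      exact ⟨k, (Finset.mem_filter.mp hk).2⟩
    obtain ⟨k, hk⟩ := hv0mem
    set T := f' k with hT
    -- every vertex of T has positive weight
    have hTpos : ∀ v ∈ T, 1 ≤ w v := by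
      intro v hv
      have := hf'cnt v
      have hmem : k ∈ Finset.univ.filter (fun i => v ∈ f' i) := by
        simp [hT ▸ hv]
      have h1 : 1 ≤ w' v := by
        rw [← this]; exact Finset.card_pos.mpr ⟨k, hmem⟩
      exact le_trans h1 (hw'le v)
    set w'' : W → ℕ := fun v => w v - (if v ∈ T then 1 else 0) with hw''
    have hw''le : ∀ v, w'' v ≤ w v := fun v => Nat.sub_le _ _
    have hw''v0 : w'' v0 = w v0 - 1 := by simp [hw'', hk]
    have hsum'' : ∑ v, w'' v < N := by
      rw [← hw]
      apply Finset.sum_lt_sum (fun i _ => hw''le i)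
      exact ⟨v0, Finset.mem_univ _, by omega⟩
    obtain ⟨m, rfl⟩ : ∃ m, n = m + 1 := ⟨n - 1, by omega⟩
    -- clique bound for w'' with m colors
    have hcl'' : ∀ Q : Finset W, (∀ u ∈ Q, ∀ x ∈ Q, u ≠ x → H.Adj u x) →
        ∑ v ∈ Q, w'' v ≤ m := by
      intro Q hQ
      have hQw := hcl Q hQ
      have key : ∑ v ∈ Q, w'' v + ∑ v ∈ Q, (if v ∈ T then 1 else 0) = ∑ v ∈ Q, w v := by
        rw [← Finset.sum_add_distrib]
        apply Finset.sum_congr rfl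
        intro v hv
        rcases eq_or_ne (w v) 0 with h0 | h0
        · have : v ∉ T := fun h => by have := hTpos v h; omega
          simp [hw'', this, h0]
        · by_cases hvT : v ∈ T
          · simp [hw'', hvT]; omega
          · simp [hw'', hvT]
      rcases Nat.lt_or_ge (∑ v ∈ Q, w v) (m + 1) with hlt | hge
      · omega
      · -- ∑_Q w = m + 1 exactly; we must show T meets Q
        have heq : ∑ v ∈ Q, w v = m + 1 := le_antisymm hQw hge
        have hTQ : ∃ v ∈ Q, v ∈ T := by
          by_cases hv0Q : v0 ∈ Q
          · exact ⟨v0, hv0Q, hk⟩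
          · -- then ∑_Q w' = m+1 and counting shows every color class meets Q
            have heq' : ∑ v ∈ Q, w' v = m + 1 := by
              rw [← heq]
              apply Finset.sum_congr rfl
              intro v hv
              have : v ≠ v0 := fun h => hv0Q (h ▸ hv)
              simp [hw', Function.update_of_ne this]
            have hcount : ∑ i : Fin (m+1), (Q.filter (fun v => v ∈ f' i)).card = m + 1 := by
              have h1 : ∑ i : Fin (m+1), (Q.filter (fun v => v ∈ f' i)).card
                  = ∑ v ∈ Q, (Finset.univ.filter (fun i => v ∈ f' i)).card := by
                simp only [Finset.card_filter]
                rw [Finset.sum_comm]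
              have h2 : ∑ v ∈ Q, (Finset.univ.filter (fun i => v ∈ f' i)).card = m + 1 :=
                (Finset.sum_congr rfl (fun v _ => hf'cnt v)).trans heq'
              exact h1.trans h2
            have hle1 : ∀ i : Fin (m+1), (Q.filter (fun v => v ∈ f' i)).card ≤ 1 := by
              intro i
              rw [Finset.card_le_one]
              intro a ha b hb
              simp only [Finset.mem_filter] at ha hb
              by_contra hne
              exact hf'stab i a ha.2 b hb.2 (hQ a ha.1 b hb.1 hne)
            have hallone : (Q.filter (fun v => v ∈ f' k)).card = 1 := by
              by_contra hne
              have hk0 : (Q.filter (fun v => v ∈ f' k)).card = 0 := by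
                have := hle1 k; omega
              have : ∑ i : Fin (m+1), (Q.filter (fun v => v ∈ f' i)).card ≤ m := by
                calc ∑ i : Fin (m+1), (Q.filter (fun v => v ∈ f' i)).card
                    = ∑ i ∈ (Finset.univ.erase k), (Q.filter (fun v => v ∈ f' i)).card :=
                      (Finset.sum_erase (f := fun i => (Q.filter (fun v => v ∈ f' i)).card) Finset.univ hk0).symm
                  _ ≤ ∑ _i ∈ (Finset.univ.erase k), 1 :=
                      Finset.sum_le_sum (fun i _ => hle1 i)
                  _ = m := by
                      rw [Finset.sum_const, smul_eq_mul, mul_one,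
                        Finset.card_erase_of_mem (Finset.mem_univ _), Finset.card_univ]
                      simp
              omega
            obtain ⟨v, hv⟩ := Finset.card_pos.mp (by omega : 0 < (Q.filter (fun v => v ∈ f' k)).card)
            simp only [Finset.mem_filter] at hv
              
            exact ⟨v, hv.1, hv.2⟩
        obtain ⟨v, hvQ, hvT⟩ := hTQ
        have h1 : 1 ≤ ∑ v ∈ Q, (if v ∈ T then 1 else 0) := by
          calc (1 : ℕ) = (if v ∈ T then 1 else 0) := by simp [hvT]
            _ ≤ _ := Finset.single_le_sum (f := fun v => if v ∈ T then 1 else 0)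
                (fun _ _ => Nat.zero_le _) hvQ
        omega
    obtain ⟨f'', hf''stab, hf''cnt⟩ := ih _ hsum'' w'' rfl m hcl''
    -- assemble: prepend T to f''
    refine ⟨Fin.cons T f'', ?_, ?_⟩
    · intro i
      refine Fin.cases ?_ ?_ i
      · simpa [hT] using hf'stab k
      · intro j; simpa using hf''stab j
    · intro v
      rw [Finset.card_filter, Fin.sum_univ_succ]
      simp only [Fin.cons_zero, Fin.cons_succ]
      rw [← Finset.card_filter]
      rw [hf''cnt v]
      by_cases hvT : v ∈ T
      · simp only [if_pos hvT]
        have h1 := hTpos v hvT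
        simp only [hw'', if_pos hvT]
        omega
      · simp only [if_neg hvT]
        simp [hw'', hvT]


lemma stab_convex {V : Type*} (G : SimpleGraph V) : Convex ℝ (stabPolytope G) :=
  convex_convexHull ℝ _

lemma stab_closed {V : Type*} [Fintype V] (G : SimpleGraph V) :
    IsClosed (stabPolytope G) := by
  classical
  apply Set.Finite.isClosed_convexHull
  apply Set.Finite.subset (Set.finite_range (fun s : Finset V =>
    Set.indicator (↑s) (fun _ => (1 : ℝ))))
  rintro x ⟨s, -, rfl⟩
  exact ⟨s, rfl⟩

/-- Scaled-integer points of QSTAB lie in STAB for perfect graphs. -/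
lemma ratpoint_mem_stab {W : Type*} [Fintype W] (H : SimpleGraph W) (hH : H.IsPerfect)
    (w : W → ℕ) (n : ℕ) (hn : 0 < n)
    (hcl : ∀ Q : Finset W, (∀ u ∈ Q, ∀ x ∈ Q, u ≠ x → H.Adj u x) → ∑ v ∈ Q, w v ≤ n) :
    (fun v => (w v : ℝ) / n) ∈ stabPolytope H := by
  classical
  obtain ⟨f, hfstab, hfcnt⟩ := stable_decomp H hH (∑ v, w v) w rfl n hcl
  have hmem : ∀ i : Fin n, Set.indicator (↑(f i)) (fun _ => (1 : ℝ)) ∈ stabPolytope H :=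
    fun i => subset_convexHull ℝ _ ⟨f i, hfstab i, rfl⟩
  have key : (fun v => (w v : ℝ) / n)
      = ∑ i : Fin n, ((n : ℝ))⁻¹ • Set.indicator (↑(f i)) (fun _ => (1 : ℝ)) := by
    funext v
    rw [Finset.sum_apply]
    have : ∀ i : Fin n, (((n : ℝ))⁻¹ • Set.indicator (↑(f i)) (fun _ => (1 : ℝ))) v
        = ((n : ℝ))⁻¹ * (if v ∈ f i then 1 else 0) := by
      intro i
      simp [Set.indicator_apply, Finset.mem_coe]
    rw [Finset.sum_congr rfl (fun i _ => this i), ← Finset.mul_sum]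
    have : ∑ i : Fin n, (if v ∈ f i then (1:ℝ) else 0)
        = ((Finset.univ.filter (fun i => v ∈ f i)).card : ℝ) := by
      rw [Finset.card_filter]
      push_cast
      rfl
    rw [this, hfcnt v]
    rw [div_eq_inv_mul]
  rw [key]
  apply Convex.sum_mem (stab_convex H)
  · intro i _; positivity
  · rw [Finset.sum_const, Finset.card_univ, Fintype.card_fin, nsmul_eq_mul,
      mul_inv_cancel₀ (by exact_mod_cast hn.ne' : (n:ℝ) ≠ 0)]
  · exact fun i _ => hmem i

/-- For perfect graphs, QSTAB ⊆ STAB. -/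
lemma perfect_qstab_subset_stab {W : Type*} [Fintype W] (H : SimpleGraph W)
    (hH : H.IsPerfect) : qstab H ⊆ stabPolytope H := by
  classical
  intro x hx
  obtain ⟨hx0, hxQ⟩ := hx
  -- approximate by scaled-integer points
  set y : ℕ → (W → ℝ) := fun m v => ((⌊((m+1 : ℕ) : ℝ) * x v⌋₊ : ℝ)) / ((m+1 : ℕ) : ℝ) with hy
  have hymem : ∀ m, y m ∈ stabPolytope H := by
    intro m
    exact ratpoint_mem_stab H hH (fun v => ⌊((m+1 : ℕ) : ℝ) * x v⌋₊) (m+1) (Nat.succ_pos m) (by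
    intro Q hQ
    have hr : ((∑ v ∈ Q, ⌊((m+1 : ℕ) : ℝ) * x v⌋₊ : ℕ) : ℝ) ≤ ((m+1 : ℕ) : ℝ) := by
      push_cast
      calc ∑ v ∈ Q, ((⌊(m+1 : ℝ) * x v⌋₊ : ℝ))
          ≤ ∑ v ∈ Q, (m+1 : ℝ) * x v := by
            apply Finset.sum_le_sum
            intro v _
            exact Nat.floor_le (mul_nonneg (by positivity) (hx0 v))
        _ = (m+1 : ℝ) * ∑ v ∈ Q, x v := by rw [Finset.mul_sum]
        _ ≤ (m+1 : ℝ) * 1 := by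
            apply mul_le_mul_of_nonneg_left (hxQ Q hQ) (by positivity)
        _ = (m+1 : ℝ) := mul_one _
    exact_mod_cast hr)
  have hconv : Filter.Tendsto y Filter.atTop (nhds x) := by
    rw [tendsto_pi_nhds]
    intro v
    have hub : ∀ m : ℕ, y m v ≤ x v := by
      intro m
      rw [hy]
      simp only
      push_cast
      rw [div_le_iff₀ (by positivity)]
      calc ((⌊((m:ℝ)+1) * x v⌋₊ : ℝ)) ≤ ((m:ℝ)+1) * x v :=
            Nat.floor_le (mul_nonneg (by positivity) (hx0 v))
        _ = x v * ((m:ℝ)+1) := mul_comm _ _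
    have hlb : ∀ m : ℕ, x v - 1 / (m+1 : ℝ) ≤ y m v := by
      intro m
      rw [hy]
      simp only
      push_cast
      rw [sub_le_iff_le_add, ← add_div, le_div_iff₀ (by positivity)]
      have := Nat.lt_floor_add_one (((m:ℝ)+1) * x v)
      nlinarith [this]
    have hl : Filter.Tendsto (fun m : ℕ => x v - 1 / (m+1 : ℝ)) Filter.atTop (nhds (x v)) := by
      have := tendsto_one_div_add_atTop_nhds_zero_nat (𝕜 := ℝ)
      have h2 := Filter.Tendsto.sub (tendsto_const_nhds (x := x v) (f := Filter.atTop)) this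
      simpa using h2
    exact tendsto_of_tendsto_of_tendsto_of_le_of_le hl tendsto_const_nhds hlb hub
  exact (stab_closed H).mem_of_tendsto hconv (Filter.Eventually.of_forall hymem)

open scoped Classical in
/-- Extension by zero maps the stable set polytope of an induced subgraph into
the stable set polytope of the whole graph. -/
lemma ext_mem_stab {V : Type*} [Fintype V] (G : SimpleGraph V) (s : Set V)
    (y : ↥s → ℝ) (hy : y ∈ stabPolytope (G.induce s)) :
    (fun v => if h : v ∈ s then y ⟨v, h⟩ else 0) ∈ stabPolytope G := by
  classical
  set E : (↥s → ℝ) →ₗ[ℝ] (V → ℝ) :=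
    { toFun := fun z => fun v => if h : v ∈ s then z ⟨v, h⟩ else 0
      map_add' := by
        intro a b; funext v; by_cases h : v ∈ s <;> simp [h]
      map_smul' := by
        intro c a; funext v; by_cases h : v ∈ s <;> simp [h] } with hE
  have hBsub : E '' {x | ∃ t : Finset ↥s,
        (∀ u ∈ t, ∀ w ∈ t, ¬ (G.induce s).Adj u w) ∧
          x = Set.indicator (↑t) (fun _ => (1 : ℝ))} ⊆
      {x | ∃ t : Finset V, (∀ u ∈ t, ∀ w ∈ t, ¬ G.Adj u w) ∧
          x = Set.indicator (↑t) (fun _ => (1 : ℝ))} := by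
    rintro _ ⟨z, ⟨t, htstab, rfl⟩, rfl⟩
    refine ⟨t.map ⟨Subtype.val, Subtype.val_injective⟩, ?_, ?_⟩
    · intro u hu w hw
      simp only [Finset.mem_map, Function.Embedding.coeFn_mk] at hu hw
      obtain ⟨u', hu', rfl⟩ := hu
      obtain ⟨w', hw', rfl⟩ := hw
      intro hadj
      exact htstab u' hu' w' hw' (by simpa using hadj)
    · funext v
      by_cases h : v ∈ s
      · have hEv : E (Set.indicator (↑t) (fun _ => (1:ℝ))) v
            = Set.indicator ((↑t : Set ↥s)) (fun _ => (1:ℝ)) (⟨v, h⟩ : ↥s) := by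
          simp [hE, h]
        rw [hEv]
        by_cases ht : (⟨v, h⟩ : ↥s) ∈ t
        · rw [Set.indicator_of_mem (by exact_mod_cast ht),
            Set.indicator_of_mem]
          simp only [Finset.coe_map, Set.mem_image, Finset.mem_coe]
          exact ⟨⟨v, h⟩, ht, rfl⟩
        · rw [Set.indicator_of_notMem (by exact_mod_cast ht),
            Set.indicator_of_notMem]
          simp only [Finset.coe_map, Set.mem_image, Finset.mem_coe,
            Function.Embedding.coeFn_mk, not_exists]
          rintro a ⟨ha, hav⟩
          exact ht (by rwa [show a = ⟨v, h⟩ from Subtype.ext hav] at ha)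
      · have hEv : E (Set.indicator (↑t) (fun _ => (1:ℝ))) v = 0 := by simp [hE, h]
        rw [hEv, Set.indicator_of_notMem]
        simp only [Finset.coe_map, Set.mem_image, Finset.mem_coe,
          Function.Embedding.coeFn_mk, not_exists]
        rintro a ⟨-, rfl⟩
        exact h a.2
  have himg : E '' stabPolytope (G.induce s) ⊆ stabPolytope G := by
    rw [stabPolytope, LinearMap.image_convexHull, stabPolytope]
    exact convexHull_mono hBsub
  exact himg ⟨y, hy, rfl⟩


/-- If every vertex of `G` is covered exactly `q` times by a family of `p` induced
perfect subgraphs of `G`, then the imperfection ratio of `G` is at most `p / q`. -/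
theorem stmt10 {V : Type*} [Fintype V] (G : SimpleGraph V) (p q : ℕ) (hq : 0 < q)
    (Vs : Fin p → Set V) (hperf : ∀ i, (G.induce (Vs i)).IsPerfect)
    (hcov : ∀ v : V, Nat.card {i : Fin p // v ∈ Vs i} = q) :
    impRatio G ≤ (p : ℝ) / q := by
  classical
  unfold impRatio
  have h0stab : (0 : V → ℝ) ∈ stabPolytope G := by
    apply subset_convexHull ℝ _
    refine ⟨∅, fun u hu => absurd hu (Finset.notMem_empty u), ?_⟩
    ext v
    simp
  have hmem : ((p : ℝ) / q) ∈ {t : ℝ | qstab G ⊆ t • stabPolytope G} := by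
    intro x hx
    rcases isEmpty_or_nonempty V with hV | hV
    · have hx0 : x = 0 := funext fun v => isEmptyElim v
      exact Set.mem_smul_set.mpr ⟨0, h0stab, by rw [smul_zero, hx0]⟩
    · obtain ⟨v₁⟩ := hV
      have hqp : q ≤ p := by
        rw [← hcov v₁]
        calc Nat.card {i : Fin p // v₁ ∈ Vs i}
            = Fintype.card {i : Fin p // v₁ ∈ Vs i} := Nat.card_eq_fintype_card
          _ ≤ Fintype.card (Fin p) := Fintype.card_subtype_le _
          _ = p := Fintype.card_fin p
      have hp : 0 < p := lt_of_lt_of_le hq hqp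
      have hpR : (0 : ℝ) < p := by exact_mod_cast hp
      have hqR : (0 : ℝ) < q := by exact_mod_cast hq
      -- restrictions lie in the induced stable set polytopes
      set z : Fin p → (V → ℝ) := fun i => fun v => if h : v ∈ Vs i then x v else 0 with hz
      have hzstab : ∀ i, z i ∈ stabPolytope G := by
        intro i
        have hri : (fun u : ↥(Vs i) => x ↑u) ∈ qstab (G.induce (Vs i)) := by
          constructor
          · exact fun u => hx.1 ↑u
          · intro Q hQ
            have hQ' : ∀ u ∈ Q.map ⟨Subtype.val, Subtype.val_injective⟩,
                ∀ w ∈ Q.map ⟨Subtype.val, Subtype.val_injective⟩, u ≠ w → G.Adj u w := by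
              intro u hu w hw hne
              simp only [Finset.mem_map, Function.Embedding.coeFn_mk] at hu hw
              obtain ⟨u', hu', rfl⟩ := hu
              obtain ⟨w', hw', rfl⟩ := hw
              have := hQ u' hu' w' hw' (fun h => hne (congrArg Subtype.val h))
              simpa using this
            have := hx.2 _ hQ'
            rwa [Finset.sum_map] at this
        have := ext_mem_stab G (Vs i) _ (perfect_qstab_subset_stab _ (hperf i) hri)
        exact this
      -- the scaled point is a convex combination
      have hcomb : ((q : ℝ) / p) • x ∈ stabPolytope G := by
        have key : ((q : ℝ) / p) • x = ∑ i : Fin p, ((p : ℝ))⁻¹ • z i := by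
          funext v
          rw [Finset.sum_apply]
          have hterm : ∀ i : Fin p, (((p : ℝ))⁻¹ • z i) v
              = ((p : ℝ))⁻¹ * (if v ∈ Vs i then x v else 0) := by
            intro i
            simp [hz]
          rw [Finset.sum_congr rfl (fun i _ => hterm i), ← Finset.mul_sum]
          have hcard : (Finset.univ.filter (fun i => v ∈ Vs i)).card = q := by
            rw [← hcov v, Nat.card_eq_fintype_card, Fintype.card_subtype]
          have : ∑ i : Fin p, (if v ∈ Vs i then x v else 0) = (q : ℝ) * x v := by
            rw [← Finset.sum_filter, Finset.sum_const, hcard, nsmul_eq_mul]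
          rw [this]
          simp only [Pi.smul_apply, smul_eq_mul]
          rw [div_eq_mul_inv]
          ring
        rw [key]
        apply Convex.sum_mem (stab_convex G)
        · intro i _; positivity
        · rw [Finset.sum_const, Finset.card_univ, Fintype.card_fin, nsmul_eq_mul,
            mul_inv_cancel₀ hpR.ne']
        · exact fun i _ => hzstab i
      refine Set.mem_smul_set.mpr ⟨((q : ℝ) / p) • x, hcomb, ?_⟩
      rw [smul_smul]
      have : (p : ℝ) / q * ((q : ℝ) / p) = 1 := by field_simp
      rw [this, one_smul]
  by_cases hbd : BddBelow {t : ℝ | qstab G ⊆ t • stabPolytope G}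
  · exact csInf_le hbd hmem
  · rw [Real.sInf_of_not_bddBelow hbd]
    positivity
end

section
/- In the enhanced conflict graph of any multicast switch traffic pattern, every maximal clique consists of vertices representing subflows that all start at the same input, or all end at the same output. Consequently, if a nonnegative rate vector r is admissible (total rate at each input and each output at most 1), then its enhanced rate vector e(r) satisfies all clique inequalities, i.e., e(r) ∈ QSTAB(G). -/
/-- A subflow: an input, a (finite) fanout set of outputs, and an output in the
fanout. -/
structure SF (I O : Type*) where
  inp : I
  fanout : Finset O
  out : O
  mem : out ∈ fanout

/-- The enhanced conflict graph on subflows: two distinct subflows are adjacent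
iff they have the same output, or the same input but different fanout sets. -/
def ecg (I O : Type*) : SimpleGraph (SF I O) where
  Adj a b := a ≠ b ∧ (a.out = b.out ∨ (a.inp = b.inp ∧ a.fanout ≠ b.fanout))
  symm := by
    constructor
    rintro a b ⟨hne, h | ⟨h1, h2⟩⟩
    · exact ⟨hne.symm, Or.inl h.symm⟩
    · exact ⟨hne.symm, Or.inr ⟨h1.symm, h2.symm⟩⟩
  loopless := by constructor; rintro a ⟨hne, _⟩; exact hne rfl

lemma SF.ext' {I O : Type*} {a b : SF I O} (h1 : a.inp = b.inp)
    (h2 : a.fanout = b.fanout) (h3 : a.out = b.out) : a = b := by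
  cases a; cases b; simp_all

lemma clique_struct {I O : Type*} (C : Set (SF I O))
    (hC : ∀ a ∈ C, ∀ b ∈ C, a ≠ b → (ecg I O).Adj a b) :
    (∀ a ∈ C, ∀ b ∈ C, a.inp = b.inp) ∨ (∀ a ∈ C, ∀ b ∈ C, a.out = b.out) := by
  by_cases hO : ∀ a ∈ C, ∀ b ∈ C, a.out = b.out
  · exact Or.inr hO
  push_neg at hO
  obtain ⟨a, ha, b, hb, hab⟩ := hO
  have hne : a ≠ b := fun h => hab (by rw [h])
  obtain ⟨-, hadj⟩ := hC a ha b hb hne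
  have hiab : a.inp = b.inp := by
    rcases hadj with h | ⟨h, -⟩
    · exact absurd h hab
    · exact h
  left
  have key : ∀ c ∈ C, c.inp = a.inp := by
    intro c hc
    by_cases hca : c = a
    · rw [hca]
    by_cases hcb : c = b
    · rw [hcb, hiab]
    by_contra hci
    obtain ⟨-, h1⟩ := hC c hc a ha hca
    obtain ⟨-, h2⟩ := hC c hc b hb hcb
    have hoa : c.out = a.out := by
      rcases h1 with h | ⟨h, -⟩
      · exact h
      · exact absurd h hci
    have hob : c.out = b.out := by
      rcases h2 with h | ⟨h, -⟩
      · exact h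
      · exact absurd (h.trans hiab.symm) hci
    exact hab (hoa ▸ hob)
  exact fun x hx y hy => (key x hx).trans (key y hy).symm

/-- Every clique of the enhanced conflict graph consists of subflows all from the
same input or all to the same output; consequently, any nonnegative admissible
rate vector has its enhanced rate vector in `QSTAB` of the enhanced conflict
graph. -/
theorem stmt14 {I O : Type*} [Fintype I] [Fintype O] [DecidableEq O]
    (r : I → Finset O → ℝ) (hr : ∀ i J, 0 ≤ r i J)
    (hin : ∀ i : I, ∑ J : Finset O, r i J ≤ 1)
    (hout : ∀ j : O, ∑ i : I, ∑ J ∈ Finset.univ.filter (fun J : Finset O => j ∈ J), r i J ≤ 1) :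
    (∀ C : Set (SF I O), (∀ a ∈ C, ∀ b ∈ C, a ≠ b → (ecg I O).Adj a b) →
      ((∀ a ∈ C, ∀ b ∈ C, a.inp = b.inp) ∨ (∀ a ∈ C, ∀ b ∈ C, a.out = b.out))) ∧
    (fun v : SF I O => r v.inp v.fanout) ∈ qstab (ecg I O) := by
  classical
  refine ⟨fun C hC => clique_struct C hC, fun v => hr _ _, ?_⟩
  intro Q hQ
  rcases Q.eq_empty_or_nonempty with rfl | ⟨a, ha⟩
  · simp
  have hC : ∀ x ∈ (Q : Set (SF I O)), ∀ y ∈ (Q : Set (SF I O)), x ≠ y → (ecg I O).Adj x y := by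
    simpa using hQ
  rcases clique_struct _ hC with hI | hO
  · -- same input
    have hinj : Set.InjOn (fun v : SF I O => v.fanout) Q := by
      intro x hx y hy hxy
      by_contra hne
      obtain ⟨-, h⟩ := hQ x hx y hy hne
      rcases h with ho | ⟨-, hf⟩
      · exact hne (SF.ext' (hI x (by simpa using hx) y (by simpa using hy)) hxy ho)
      · exact hf hxy
    calc ∑ v ∈ Q, r v.inp v.fanout = ∑ v ∈ Q, r a.inp v.fanout := by
          refine Finset.sum_congr rfl fun v hv => ?_
          rw [hI v (by simpa using hv) a (by simpa using ha)]
      _ = ∑ J ∈ Q.image (fun v => v.fanout), r a.inp J := by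
          rw [Finset.sum_image (fun x hx y hy => hinj hx hy)]
      _ ≤ ∑ J : Finset O, r a.inp J :=
          Finset.sum_le_sum_of_subset_of_nonneg (Finset.subset_univ _)
            (fun J _ _ => hr _ _)
      _ ≤ 1 := hin a.inp
  · -- same output
    set j := a.out with hj
    have hinj : Set.InjOn (fun v : SF I O => (v.inp, v.fanout)) Q := by
      intro x hx y hy hxy
      simp only [Prod.mk.injEq] at hxy
      exact SF.ext' hxy.1 hxy.2
        ((hO x (by simpa using hx) a (by simpa using ha)).trans
          (hO a (by simpa using ha) y (by simpa using hy)))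
    calc ∑ v ∈ Q, r v.inp v.fanout
        = ∑ p ∈ Q.image (fun v => (v.inp, v.fanout)), r p.1 p.2 := by
          rw [Finset.sum_image (fun x hx y hy => hinj hx hy)]
      _ ≤ ∑ p ∈ Finset.univ ×ˢ Finset.univ.filter (fun J : Finset O => j ∈ J), r p.1 p.2 := by
          refine Finset.sum_le_sum_of_subset_of_nonneg ?_ (fun p _ _ => hr _ _)
          intro p hp
          simp only [Finset.mem_image] at hp
          obtain ⟨v, hv, rfl⟩ := hp
          simp only [Finset.mem_product, Finset.mem_filter, Finset.mem_univ, true_and]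
          have : v.out = j := hO v (by simpa using hv) a (by simpa using ha)
          exact this ▸ v.mem
      _ = ∑ i : I, ∑ J ∈ Finset.univ.filter (fun J : Finset O => j ∈ J), r i J := by
          rw [Finset.sum_product]
      _ ≤ 1 := hout j
end

section
/- For the 2×N traffic pattern with one broadcast of rate r_0 from input 1 and unicasts of rates r_1,...,r_N from input 2 to outputs 1,...,N, served with fanout splitting but no coding, the rate vector is achievable if and only if: r_i ≥ 0 for all i; Σ_{i=1}^N r_i ≤ 1; r_0 + r_i ≤ 1 for each i; and 2r_0 + Σ_{i=1}^N r_i ≤ 2. -/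
lemma achievable_construct (N F : ℕ) (hN : 0 < N) (hF : 0 < F) (a0 : ℕ) (a : Fin N → ℕ)
    (hsum : ∑ i, a i ≤ F) (hia : ∀ i, a0 + a i ≤ F) (h2 : 2 * a0 + ∑ i, a i ≤ 2 * F) :
    ∃ (A : Fin F → Option (Fin N)) (B : Fin F → Option (ℕ × Finset (Fin N))),
      (∀ t p S, B t = some (p, S) → ∀ j ∈ S, A t ≠ some j) ∧
      (∀ j : Fin N, a j ≤ (Finset.univ.filter (fun t => A t = some j)).card) ∧
      (∀ p < a0, ∀ j : Fin N, ∃ t S, B t = some (p, S) ∧ j ∈ S) := by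
  classical
  set a' : ℕ → ℕ := fun i => if h : i < N then a ⟨i, h⟩ else 0 with ha'
  set c : ℕ → ℕ := fun n => ∑ j ∈ Finset.range n, a' j with hc
  have hcmono : Monotone c := fun i j hij =>
    Finset.sum_le_sum_of_subset (Finset.range_subset_range.mpr hij)
  have hcsucc : ∀ n, c (n + 1) = c n + a' n := fun n => Finset.sum_range_succ _ n
  have hcN : c N = ∑ i, a i := by
    simp only [hc, ha']
    rw [← Fin.sum_univ_eq_sum_range]
    exact Finset.sum_congr rfl (fun i _ => by simp)
  have hU : c N ≤ F := hcN ▸ hsum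
  have h2' : 2 * a0 + c N ≤ 2 * F := by rw [hcN]; exact h2
  have ha0F : a0 ≤ F := le_trans (Nat.le_add_right _ _) (hia ⟨0, hN⟩)
  -- existence of label
  have hex : ∀ n, ∀ t, t < c n → ∃ i, i < n ∧ c i ≤ t ∧ t < c (i + 1) := by
    intro n
    induction n with
    | zero => intro t ht; simp [hc] at ht
    | succ n ih =>
      intro t ht
      by_cases h : t < c n
      · obtain ⟨i, hi, h1, h2⟩ := ih t h
        exact ⟨i, Nat.lt_succ_of_lt hi, h1, h2⟩
      · exact ⟨n, Nat.lt_succ_self n, Nat.le_of_not_lt h, ht⟩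
  have huniq : ∀ t i i', c i ≤ t → t < c (i + 1) → c i' ≤ t → t < c (i' + 1) → i = i' := by
    intro t i i' h1 h2 h3 h4
    rcases lt_trichotomy i i' with h | h | h
    · have := le_trans (hcmono (show i + 1 ≤ i' from h)) h3
      omega
    · exact h
    · have := le_trans (hcmono (show i' + 1 ≤ i from h)) h1
      omega
  set label : ℕ → Fin N := fun t =>
    if h : ∃ i : Fin N, c i ≤ t ∧ t < c ((i : ℕ) + 1) then h.choose else ⟨0, hN⟩ with hlab
  have hlabel : ∀ t, t < c N → c (label t) ≤ t ∧ t < c ((label t : ℕ) + 1) := by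
    intro t ht
    obtain ⟨i, hiN, h1, h2⟩ := hex N t ht
    have hexi : ∃ i : Fin N, c (i : ℕ) ≤ t ∧ t < c ((i : ℕ) + 1) := ⟨⟨i, hiN⟩, h1, h2⟩
    simp only [hlab, dif_pos hexi]
    exact hexi.choose_spec
  have hlabel_eq : ∀ t (i : Fin N), c (i : ℕ) ≤ t → t < c ((i : ℕ) + 1) → label t = i := by
    intro t i h1 h2
    have ht : t < c N := lt_of_lt_of_le h2 (hcmono i.isLt)
    obtain ⟨h3, h4⟩ := hlabel t ht
    exact Fin.ext (huniq t _ _ h3 h4 h1 h2)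
  set Af : ℕ → Option (Fin N) := fun t => if t < c N then some (label t) else none with hAf
  set Bf : ℕ → Option (ℕ × Finset (Fin N)) := fun t =>
    if t < a0 - (F - c N) then some (F - c N + t, Finset.univ \ {label t})
    else if c N - (a0 - (F - c N)) ≤ t ∧ t < c N then
      some (F - c N + (t - (c N - (a0 - (F - c N)))), Finset.univ \ {label t})
    else if c N ≤ t ∧ t < c N + min a0 (F - c N) then some (t - c N, Finset.univ)
    else none with hBf
  refine ⟨fun t => Af (t : ℕ), fun t => Bf (t : ℕ), ?_, ?_, ?_⟩
  · -- no collision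
    intro t p S hB j hj
    simp only [hBf] at hB
    split_ifs at hB with h1 h2 h3
    · simp only [Option.some.injEq, Prod.mk.injEq] at hB
      obtain ⟨-, rfl⟩ := hB
      have htU : (t : ℕ) < c N := by omega
      simp only [hAf, if_pos htU, ne_eq, Option.some.injEq]
      intro heq
      rw [heq] at hj
      simp at hj
    · simp only [Option.some.injEq, Prod.mk.injEq] at hB
      obtain ⟨-, rfl⟩ := hB
      have htU : (t : ℕ) < c N := h2.2
      simp only [hAf, if_pos htU, ne_eq, Option.some.injEq]
      intro heq
      rw [heq] at hj
      simp at hj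
    · have hnt : ¬ ((t : ℕ) < c N) := Nat.not_lt.mpr h3.1
      intro h
      simp only [hAf, if_neg hnt] at h
      exact Option.noConfusion rfl (heq_of_eq h)

  · -- unicast counts
    intro j
    have hjsucc : c ((j : ℕ) + 1) = c (j : ℕ) + a j := by
      rw [hcsucc]; congr 1; simp [ha']
    have hlt : ∀ x : Fin (a j), c (j : ℕ) + (x : ℕ) < F := by
      intro x
      have h1 : c (j : ℕ) + (x : ℕ) < c ((j : ℕ) + 1) := by rw [hjsucc]; omega
      exact lt_of_lt_of_le h1 (le_trans (hcmono j.isLt) hU)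
    calc a j = (Finset.univ : Finset (Fin (a j))).card := by simp
    _ ≤ _ := by
        apply Finset.card_le_card_of_injOn
          (fun x : Fin (a j) => (⟨c (j : ℕ) + (x : ℕ), hlt x⟩ : Fin F))
        · intro x _
          have hin : c (j : ℕ) + (x : ℕ) < c N :=
            lt_of_lt_of_le (by rw [hjsucc]; omega) (hcmono j.isLt)
          simp only [Finset.mem_coe, Finset.mem_filter, Finset.mem_univ, true_and]
          show Af (c (j : ℕ) + (x : ℕ)) = some j
          simp only [hAf, if_pos hin, Option.some.injEq]
          exact hlabel_eq _ j (Nat.le_add_right _ _) (by rw [hjsucc]; omega)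
        · intro x _ y _ hxy
          have : c (j : ℕ) + (x : ℕ) = c (j : ℕ) + (y : ℕ) := congrArg Fin.val hxy
          exact Fin.ext (by omega)
  · -- broadcast packets
    intro p hp j
    have hkU : 2 * (a0 - (F - c N)) ≤ c N := by omega
    by_cases hpf : p < F - c N
    · have htF : c N + p < F := by omega
      refine ⟨⟨c N + p, htF⟩, Finset.univ, ?_, Finset.mem_univ j⟩
      show Bf (c N + p) = _
      simp only [hBf]
      rw [if_neg (by omega), if_neg (by omega), if_pos ⟨by omega, by omega⟩]
      simp only [Option.some.injEq, Prod.mk.injEq]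
      exact ⟨by omega, trivial⟩
    · have hsk : p - (F - c N) < a0 - (F - c N) := by omega
      have hlt1 : p - (F - c N) < F := by omega
      have hlt2 : p - (F - c N) + (c N - (a0 - (F - c N))) < F := by omega
      have hB1 : Bf (p - (F - c N)) =
          some (p, Finset.univ \ {label (p - (F - c N))}) := by
        simp only [hBf]
        rw [if_pos hsk]
        simp only [Option.some.injEq, Prod.mk.injEq]
        exact ⟨by omega, trivial⟩
      have hB2 : Bf (p - (F - c N) + (c N - (a0 - (F - c N)))) =
          some (p, Finset.univ \ {label (p - (F - c N) + (c N - (a0 - (F - c N))))}) := by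
        simp only [hBf]
        rw [if_neg (by omega), if_pos ⟨by omega, by omega⟩]
        simp only [Option.some.injEq, Prod.mk.injEq]
        exact ⟨by omega, trivial⟩
      have hne : label (p - (F - c N)) ≠
          label (p - (F - c N) + (c N - (a0 - (F - c N)))) := by
        intro heq
        obtain ⟨h1a, h1b⟩ := hlabel (p - (F - c N)) (by omega)
        obtain ⟨h2a, h2b⟩ := hlabel (p - (F - c N) + (c N - (a0 - (F - c N)))) (by omega)
        rw [← heq] at h2b
        have hsucc : c ((label (p - (F - c N)) : ℕ) + 1)
            = c ((label (p - (F - c N)) : ℕ)) + a (label (p - (F - c N))) := by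
          rw [hcsucc]; congr 1; simp [ha']
        have hha := hia (label (p - (F - c N)))
        omega
      by_cases hj : j = label (p - (F - c N))
      · refine ⟨⟨p - (F - c N) + (c N - (a0 - (F - c N))), hlt2⟩, _, hB2, ?_⟩
        simp only [Finset.mem_sdiff, Finset.mem_univ, true_and, Finset.mem_singleton]
        rw [hj]
        exact hne
      · exact ⟨⟨p - (F - c N), hlt1⟩, _, hB1, by
          simp only [Finset.mem_sdiff, Finset.mem_univ, true_and, Finset.mem_singleton]
          exact hj⟩


/-- Achievability, with fanout splitting but no coding, of the `2 × N` traffic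
pattern with one broadcast of rate `r0` from input 1 and unicasts of rates
`r j` from input 2 to each output `j`.  There is a frame of `F` slots; in each
slot `t`, input 2 serves at most one unicast output (`A t`) and input 1 may send
one broadcast packet `p` to a set `S` of outputs not currently occupied by
input 2 (`B t = some (p, S)`).  Each unicast `j` must be served in at least
`r j · F` slots, and at least `r0 · F` broadcast packets must each be delivered
to every output (possibly over several slots, i.e. with fanout splitting, but
each packet is sent uncoded). -/
def Achievable2N (N : ℕ) (r0 : ℝ) (r : Fin N → ℝ) : Prop :=
  ∃ F : ℕ, 0 < F ∧
    ∃ (A : Fin F → Option (Fin N)) (B : Fin F → Option (ℕ × Finset (Fin N))),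
      (∀ t p S, B t = some (p, S) → ∀ j ∈ S, A t ≠ some j) ∧
      (∀ j : Fin N,
        r j * F ≤ ((Finset.univ.filter (fun t => A t = some j)).card : ℝ)) ∧
      ∃ m : ℕ, r0 * F ≤ (m : ℝ) ∧
        ∀ p < m, ∀ j : Fin N, ∃ t S, B t = some (p, S) ∧ j ∈ S

/-- The rate region of the `2 × N` broadcast-plus-unicasts pattern with fanout
splitting but no coding: a nonnegative (rational) rate vector is achievable iff
`Σ rᵢ ≤ 1`, `r0 + rᵢ ≤ 1` for each `i`, and `2 r0 + Σ rᵢ ≤ 2`. -/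
theorem stmt16 (N : ℕ) (hN : 0 < N) (r0 : ℝ) (r : Fin N → ℝ)
    (hq0 : ∃ q : ℚ, r0 = q) (hq : ∀ i, ∃ q : ℚ, r i = q)
    (h0 : 0 ≤ r0) (hpos : ∀ i, 0 ≤ r i) :
    Achievable2N N r0 r ↔
      (∑ i, r i ≤ 1 ∧ (∀ i, r0 + r i ≤ 1) ∧ 2 * r0 + ∑ i, r i ≤ 2) := by
  classical
  constructor
  · rintro ⟨F, hF, A, B, hAB, hA, m, hm, hB⟩
    have hF' : (0 : ℝ) < F := by exact_mod_cast hF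
    set cnt : Fin N → ℕ := fun j => (Finset.univ.filter (fun t => A t = some j)).card with hcnt
    have hsumcnt : ∑ j, cnt j = (Finset.univ.filter (fun t => A t ≠ none)).card := by
      rw [← Finset.card_biUnion]
      · congr 1
        ext t
        simp [Option.ne_none_iff_exists']
      · intro x _ y _ hxy
        rw [Function.onFun, Finset.disjoint_left]
        intro t ht1 ht2
        simp only [Finset.mem_filter, Finset.mem_univ, true_and] at ht1 ht2
        rw [ht1] at ht2
        exact hxy (Option.some.inj ht2)
    have hUF : ∑ j, cnt j ≤ F := by
      rw [hsumcnt]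
      calc _ ≤ (Finset.univ : Finset (Fin F)).card := Finset.card_le_univ _
      _ = F := by simp
    -- (i)
    have hi1 : ∑ i, r i ≤ 1 := by
      have hmul : (∑ i, r i) * F ≤ 1 * (F : ℝ) := by
        rw [one_mul]
        calc (∑ i, r i) * F = ∑ i, r i * F := Finset.sum_mul _ _ _
        _ ≤ ∑ i, (cnt i : ℝ) := Finset.sum_le_sum (fun i _ => hA i)
        _ = ((∑ i, cnt i : ℕ) : ℝ) := by push_cast; rfl
        _ ≤ F := by exact_mod_cast hUF
      exact le_of_mul_le_mul_right hmul hF'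
    -- (ii)
    have key2 : ∀ i : Fin N, m + cnt i ≤ F := by
      intro i
      set tp : ℕ → Fin F := fun p => if h : p < m then (hB p h i).choose else ⟨0, hF⟩ with htp
      have hspec : ∀ p (h : p < m), ∃ S, B (tp p) = some (p, S) ∧ i ∈ S := by
        intro p h
        simp only [htp, dif_pos h]
        exact (hB p h i).choose_spec
      have hcard := Finset.card_le_card_of_injOn tp
        (s := Finset.range m) (t := Finset.univ.filter (fun t => ¬ (A t = some i)))
        (by
          intro p hp
          obtain ⟨S, hBS, hiS⟩ := hspec p (Finset.mem_range.mp hp)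
          simp only [Finset.mem_coe, Finset.mem_filter, Finset.mem_univ, true_and]
          exact hAB _ _ _ hBS i hiS)
        (by
          intro p hp q hq hpq
          obtain ⟨S1, h1, -⟩ := hspec p (Finset.mem_range.mp hp)
          obtain ⟨S2, h2, -⟩ := hspec q (Finset.mem_range.mp hq)
          rw [hpq, h2] at h1
          exact ((Prod.mk.injEq _ _ _ _).mp (Option.some.inj h1)).1.symm)
      rw [Finset.card_range] at hcard
      have hsplit := Finset.card_filter_add_card_filter_not
        (s := (Finset.univ : Finset (Fin F))) (p := fun t => A t = some i)
      simp only [Finset.card_univ, Fintype.card_fin] at hsplit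
      have hci : cnt i = (Finset.univ.filter (fun t => A t = some i)).card := rfl
      omega
    have hi2 : ∀ i, r0 + r i ≤ 1 := by
      intro i
      have hmul : (r0 + r i) * F ≤ 1 * (F : ℝ) := by
        rw [one_mul, add_mul]
        calc r0 * F + r i * F ≤ (m : ℝ) + (cnt i : ℝ) := add_le_add hm (hA i)
        _ = ((m + cnt i : ℕ) : ℝ) := by push_cast; ring
        _ ≤ F := by exact_mod_cast key2 i
      exact le_of_mul_le_mul_right hmul hF'
    -- (iii)
    have key3 : 2 * m + ∑ j, cnt j ≤ 2 * F := by
      set j0 : Fin N := ⟨0, hN⟩ with hj0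
      set u : ℕ → Fin F := fun p => if h : p < m then (hB p h j0).choose else ⟨0, hF⟩ with hu
      have huspec : ∀ p (h : p < m), ∃ S, B (u p) = some (p, S) ∧ j0 ∈ S := by
        intro p h
        simp only [hu, dif_pos h]
        exact (hB p h j0).choose_spec
      set jv : ℕ → Fin N := fun p => (A (u p)).getD j0 with hjv
      set v : ℕ → Fin F := fun p => if h : p < m then (hB p h (jv p)).choose else ⟨0, hF⟩ with hv
      have hvspec : ∀ p (h : p < m), ∃ S, B (v p) = some (p, S) ∧ jv p ∈ S := by
        intro p h
        simp only [hv, dif_pos h]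
        exact (hB p h (jv p)).choose_spec
      have hvne : ∀ p (h : p < m), A (u p) ≠ none → v p ≠ u p := by
        intro p h hA' heq
        obtain ⟨j1, hj1⟩ := Option.ne_none_iff_exists'.mp hA'
        obtain ⟨S, hBS, hjS⟩ := hvspec p h
        have hjveq : jv p = j1 := by simp [hjv, hj1]
        have := hAB _ _ _ hBS (jv p) hjS
        rw [heq, hj1, hjveq] at this
        exact this rfl
      set P : ℕ → Finset (Fin F × Bool) := fun p =>
        if A (u p) = none then {(u p, false), (u p, true)} else {(u p, true), (v p, true)} with hP
      have hPslot : ∀ p (h : p < m) (x : Fin F × Bool), x ∈ P p → ∃ S, B x.1 = some (p, S) := by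
        intro p h x hx
        simp only [hP] at hx
        split_ifs at hx with hc1 <;>
          simp only [Finset.mem_insert, Finset.mem_singleton] at hx <;>
          rcases hx with rfl | rfl
        · obtain ⟨S, hS, -⟩ := huspec p h; exact ⟨S, hS⟩
        · obtain ⟨S, hS, -⟩ := huspec p h; exact ⟨S, hS⟩
        · obtain ⟨S, hS, -⟩ := huspec p h; exact ⟨S, hS⟩
        · obtain ⟨S, hS, -⟩ := hvspec p h; exact ⟨S, hS⟩
      have hPcard : ∀ p ∈ Finset.range m, (P p).card = 2 := by
        intro p hp
        have hpm := Finset.mem_range.mp hp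
        simp only [hP]
        split_ifs with hcase
        · rw [Finset.card_insert_of_notMem (by simp), Finset.card_singleton]
        · rw [Finset.card_insert_of_notMem, Finset.card_singleton]
          simp only [Finset.mem_singleton, Prod.mk.injEq, not_and]
          intro hup
          exact absurd hup.symm (hvne p hpm hcase)
      have hPdisj : (Finset.range m : Set ℕ).PairwiseDisjoint P := by
        intro x hx y hy hxy
        refine Finset.disjoint_left.mpr ?_
        intro z hzx hzy
        obtain ⟨S1, h1⟩ := hPslot x (Finset.mem_range.mp (Finset.mem_coe.mp hx)) z hzx
        obtain ⟨S2, h2⟩ := hPslot y (Finset.mem_range.mp (Finset.mem_coe.mp hy)) z hzy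
        rw [h1] at h2
        exact hxy ((Prod.mk.injEq _ _ _ _).mp (Option.some.inj h2)).1
      set Q : Finset (Fin F × Bool) :=
        (Finset.univ.filter (fun t => A t ≠ none)).image (fun t => (t, false)) with hQ
      have hQcard : Q.card = ∑ j, cnt j := by
        rw [hQ, Finset.card_image_of_injective _ (fun s t h => by
          exact ((Prod.mk.injEq _ _ _ _).mp h).1), hsumcnt]
      have hQdisj : Disjoint Q ((Finset.range m).biUnion P) := by
        rw [Finset.disjoint_left]
        intro z hzQ hzP
        simp only [hQ, Finset.mem_image, Finset.mem_filter, Finset.mem_univ, true_and] at hzQ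
        obtain ⟨t, htA, rfl⟩ := hzQ
        simp only [Finset.mem_biUnion] at hzP
        obtain ⟨p, hp, hzp⟩ := hzP
        simp only [hP] at hzp
        split_ifs at hzp with hcase
        · simp only [Finset.mem_insert, Finset.mem_singleton, Prod.mk.injEq] at hzp
          rcases hzp with ⟨rfl, -⟩ | ⟨-, hfalse⟩
          · exact htA hcase
          · exact Bool.noConfusion hfalse
        · simp only [Finset.mem_insert, Finset.mem_singleton, Prod.mk.injEq] at hzp
          rcases hzp with ⟨-, hfalse⟩ | ⟨-, hfalse⟩ <;> exact Bool.noConfusion hfalse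
      have hunion : Q.card + ∑ p ∈ Finset.range m, (P p).card ≤ 2 * F := by
        calc Q.card + ∑ p ∈ Finset.range m, (P p).card
            = Q.card + ((Finset.range m).biUnion P).card := by
              rw [Finset.card_biUnion hPdisj]
        _ = (Q ∪ (Finset.range m).biUnion P).card := (Finset.card_union_of_disjoint hQdisj).symm
        _ ≤ (Finset.univ : Finset (Fin F × Bool)).card := Finset.card_le_univ _
        _ = 2 * F := by simp [Fintype.card_prod]; ring
      rw [hQcard, Finset.sum_congr rfl hPcard, Finset.sum_const, Finset.card_range,
        smul_eq_mul] at hunion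
      omega
    have hi3 : 2 * r0 + ∑ i, r i ≤ 2 := by
      have hmul : (2 * r0 + ∑ i, r i) * F ≤ 2 * (F : ℝ) := by
        rw [add_mul, mul_assoc]
        calc 2 * (r0 * F) + (∑ i, r i) * F
            ≤ 2 * (m : ℝ) + ((∑ j, cnt j : ℕ) : ℝ) := by
              refine add_le_add (by linarith [hm]) ?_
              calc (∑ i, r i) * F = ∑ i, r i * F := Finset.sum_mul _ _ _
              _ ≤ ∑ i, (cnt i : ℝ) := Finset.sum_le_sum (fun i _ => hA i)
              _ = _ := by push_cast; rfl
        _ = ((2 * m + ∑ j, cnt j : ℕ) : ℝ) := by push_cast; ring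
        _ ≤ ((2 * F : ℕ) : ℝ) := by exact_mod_cast key3
        _ = 2 * (F : ℝ) := by push_cast; ring
      exact le_of_mul_le_mul_right hmul hF'
    exact ⟨hi1, hi2, hi3⟩
  · rintro ⟨hs1, hs2, hs3⟩
    obtain ⟨q0, hq0e⟩ := hq0
    choose q hqe using hq
    have hq0nn : 0 ≤ q0 := by rw [hq0e] at h0; exact_mod_cast h0
    have hqnn : ∀ i, 0 ≤ q i := by
      intro i
      have := hpos i
      rw [hqe i] at this
      exact_mod_cast this
    set D : ℕ := q0.den * ∏ i, (q i).den with hD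
    have hDpos : 0 < D := Nat.mul_pos q0.den_pos (Finset.prod_pos (fun i _ => (q i).den_pos))
    have key : ∀ x : ℚ, 0 ≤ x → x.den ∣ D → ∃ a : ℕ, (x : ℝ) * D = a := by
      rintro x hx ⟨e, he⟩
      refine ⟨x.num.toNat * e, ?_⟩
      have hnum : (0 : ℤ) ≤ x.num := Rat.num_nonneg.mpr hx
      have hQ1 : (x * D : ℚ) = (x.num : ℚ) * (e : ℚ) := by
        rw [he]
        push_cast
        rw [← mul_assoc, Rat.mul_den_eq_num]
      have hQ : (x * D : ℚ) = ((x.num.toNat * e : ℕ) : ℚ) := by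
        rw [hQ1]
        have hcast : ((x.num.toNat : ℕ) : ℚ) = (x.num : ℚ) := by
          exact_mod_cast Int.toNat_of_nonneg hnum
        push_cast
        rw [hcast]
      calc (x : ℝ) * D = ((x * D : ℚ) : ℝ) := by push_cast; ring
      _ = _ := by rw [hQ]; push_cast; ring
    obtain ⟨a0, ha0⟩ := key q0 hq0nn ⟨∏ i, (q i).den, rfl⟩
    have hdvd : ∀ i, (q i).den ∣ D :=
      fun i => Dvd.dvd.mul_left (Finset.dvd_prod_of_mem _ (Finset.mem_univ i)) _
    choose aa haa using fun i => key (q i) (hqnn i) (hdvd i)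
    have hra : ∀ i, r i * D = aa i := fun i => by rw [hqe i]; exact haa i
    have hr0a : r0 * D = a0 := by rw [hq0e]; exact ha0
    have hDR : (0 : ℝ) ≤ (D : ℝ) := Nat.cast_nonneg D
    have e1 : ∑ i, aa i ≤ D := by
      have hreal : ((∑ i, aa i : ℕ) : ℝ) ≤ (D : ℝ) := by
        push_cast
        calc ∑ i, (aa i : ℝ) = ∑ i, r i * D := by
              exact Finset.sum_congr rfl (fun i _ => (hra i).symm)
        _ = (∑ i, r i) * D := (Finset.sum_mul _ _ _).symm
        _ ≤ 1 * D := mul_le_mul_of_nonneg_right hs1 hDR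
        _ = D := one_mul _
      exact_mod_cast hreal
    have e2 : ∀ i, a0 + aa i ≤ D := by
      intro i
      have hreal : ((a0 + aa i : ℕ) : ℝ) ≤ (D : ℝ) := by
        push_cast
        calc (a0 : ℝ) + aa i = r0 * D + r i * D := by rw [hr0a, hra i]
        _ = (r0 + r i) * D := (add_mul _ _ _).symm
        _ ≤ 1 * D := mul_le_mul_of_nonneg_right (hs2 i) hDR
        _ = D := one_mul _
      exact_mod_cast hreal
    have e3 : 2 * a0 + ∑ i, aa i ≤ 2 * D := by
      have hreal : ((2 * a0 + ∑ i, aa i : ℕ) : ℝ) ≤ ((2 * D : ℕ) : ℝ) := by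
        push_cast
        calc 2 * (a0 : ℝ) + ∑ i, (aa i : ℝ)
            = 2 * (r0 * D) + ∑ i, r i * D := by
              rw [hr0a]
              congr 1
              exact Finset.sum_congr rfl (fun i _ => (hra i).symm)
        _ = (2 * r0 + ∑ i, r i) * D := by rw [add_mul, Finset.sum_mul]; ring
        _ ≤ 2 * D := mul_le_mul_of_nonneg_right hs3 hDR
      exact_mod_cast hreal
    obtain ⟨A, B, hc1, hc2, hc3⟩ := achievable_construct N D hN hDpos a0 aa e1 e2 e3
    refine ⟨D, hDpos, A, B, hc1, ?_, a0, ?_, hc3⟩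
    · intro j
      rw [hra j]
      exact_mod_cast hc2 j
    · rw [hr0a]
end

section
/- For the special rate point r_0 = 1 - 1/N, r_i = 1/N (i=1..N) of the 2×N broadcast-plus-unicasts traffic pattern, fanout splitting without coding requires a speedup of at least 1.5 - 1/N, since this point violates the constraint 2r_0 + Σ r_i ≤ 2 by a factor of 1.5 - 1/N. -/
/-- The fanout-splitting-without-coding rate region of the `2 × N`
broadcast-plus-unicasts pattern. -/
def InFSRegion (N : ℕ) (r0 : ℝ) (r : Fin N → ℝ) : Prop :=
  (0 ≤ r0 ∧ ∀ i, 0 ≤ r i) ∧ ∑ i, r i ≤ 1 ∧ (∀ i, r0 + r i ≤ 1) ∧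
    2 * r0 + ∑ i, r i ≤ 2

/-- For the special rate point `r0 = 1 - 1/N`, `rᵢ = 1/N`, we have
`2 r0 + Σ rᵢ = 3 - 2/N`, so the point violates the fanout-splitting constraint
`2 r0 + Σ rᵢ ≤ 2` by a factor of `1.5 - 1/N`: any speedup `s > 0` rendering the
scaled point achievable with fanout splitting but no coding must satisfy
`s ≥ 1.5 - 1/N`. -/
theorem stmt17 (N : ℕ) (hN : 0 < N) :
    (2 * (1 - 1 / (N : ℝ)) + ∑ _i : Fin N, (1 / (N : ℝ)) = 3 - 2 / N) ∧
    ∀ s : ℝ, 0 < s →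
      InFSRegion N ((1 - 1 / (N : ℝ)) / s) (fun _ => (1 / (N : ℝ)) / s) →
      1.5 - 1 / (N : ℝ) ≤ s := by
  have hNR : (0 : ℝ) < N := by exact_mod_cast hN
  have hsum : ∑ _i : Fin N, (1 / (N : ℝ)) = 1 := by
    rw [Finset.sum_const, Finset.card_univ, Fintype.card_fin, nsmul_eq_mul]
    field_simp
  constructor
  · rw [hsum]; ring
  · intro s hs hmem
    obtain ⟨_, _, _, h4⟩ := hmem
    have hsum2 : ∑ _i : Fin N, (1 / (N : ℝ)) / s = 1 / s := by
      rw [Finset.sum_const, Finset.card_univ, Fintype.card_fin, nsmul_eq_mul]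
      field_simp
    rw [hsum2] at h4
    have h4' : (2 * (1 - 1 / (N:ℝ)) + 1) / s ≤ 2 := by
      rw [add_div, mul_div_assoc]; exact h4
    rw [div_le_iff₀ hs] at h4'
    nlinarith [one_div_pos.mpr hNR]
end

section
/- For the enhanced conflict graph G of the 2×N unicasts-and-broadcast pattern (broadcast from input 1, unicasts from input 2), the vectors v(m,U,V) given by u_{1m} = 1/|U|, b_{1j} = 1 - 1/|U| for j ∈ V, u_{2j} = 1/|U| for j ∈ U, and all other coordinates zero — for any U ⊆ [N] with 2 ≤ |U| ≤ N-1, m ∈ [N]\U, and V ⊇ U — are extreme points of QSTAB(G), where QSTAB(G) is defined by: u_{1j}, b_{1j}, u_{2j} ≥ 0; b_{1j} + Σ_k u_{1k} ≤ 1 for each j; Σ_j u_{2j} ≤ 1; and u_{1j} + u_{2j} + b_{1j} ≤ 1 for each j. -/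
/-- `QSTAB` of the enhanced conflict graph of the `2 × N` unicasts-and-broadcast
pattern, as a subset of `ℝ^{3N}`; a point is `(u1, b1, u2)` where `u1 j`,
`b1 j` are the unicast and broadcast-subflow rates at input 1 and `u2 j` the
unicast rates at input 2.  The constraints are nonnegativity together with the
clique inequalities `b1 j + Σ_k u1 k ≤ 1`, `Σ_j u2 j ≤ 1`, and
`u1 j + u2 j + b1 j ≤ 1`. -/
def Q2N (N : ℕ) : Set ((Fin N → ℝ) × (Fin N → ℝ) × (Fin N → ℝ)) :=
  {x | (∀ j, 0 ≤ x.1 j) ∧ (∀ j, 0 ≤ x.2.1 j) ∧ (∀ j, 0 ≤ x.2.2 j) ∧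
    (∀ j, x.2.1 j + ∑ k, x.1 k ≤ 1) ∧ (∑ j, x.2.2 j ≤ 1) ∧
    (∀ j, x.1 j + x.2.2 j + x.2.1 j ≤ 1)}

/-- The vertex `v(m, U, V)` of `QSTAB(G)`: `u1 m = 1/|U|`, `b1 j = 1 - 1/|U|`
for `j ∈ V`, `u2 j = 1/|U|` for `j ∈ U`, all other coordinates zero. -/
noncomputable def vPoint (N : ℕ) (m : Fin N) (U Vt : Finset (Fin N)) :
    (Fin N → ℝ) × (Fin N → ℝ) × (Fin N → ℝ) :=
  (fun j => if j = m then ((U.card : ℝ))⁻¹ else 0,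
   fun j => if j ∈ Vt then 1 - ((U.card : ℝ))⁻¹ else 0,
   fun j => if j ∈ U then ((U.card : ℝ))⁻¹ else 0)

private lemma comb_le (a b p q t : ℝ) (ha : 0 < a) (hb : 0 < b) (hab : a + b = 1)
    (hp : p ≤ t) (hq : q ≤ t) (h : a * p + b * q = t) : p = t ∧ q = t := by
  have h1 : a * p ≤ a * t := mul_le_mul_of_nonneg_left hp ha.le
  have h2 : b * q ≤ b * t := mul_le_mul_of_nonneg_left hq hb.le
  have h3 : a * t + b * t = t := by rw [← add_mul, hab, one_mul]
  have e1 : a * p = a * t := by linarith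
  have e2 : b * q = b * t := by linarith
  exact ⟨mul_left_cancel₀ ha.ne' e1, mul_left_cancel₀ hb.ne' e2⟩

private lemma comb_ge (a b p q t : ℝ) (ha : 0 < a) (hb : 0 < b) (hab : a + b = 1)
    (hp : t ≤ p) (hq : t ≤ q) (h : a * p + b * q = t) : p = t ∧ q = t := by
  have h1 : a * t ≤ a * p := mul_le_mul_of_nonneg_left hp ha.le
  have h2 : b * t ≤ b * q := mul_le_mul_of_nonneg_left hq hb.le
  have h3 : a * t + b * t = t := by rw [← add_mul, hab, one_mul]
  have e1 : a * p = a * t := by linarith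
  have e2 : b * q = b * t := by linarith
  exact ⟨mul_left_cancel₀ ha.ne' e1, mul_left_cancel₀ hb.ne' e2⟩

private lemma key_unique (N : ℕ) (U Vt : Finset (Fin N)) (m : Fin N)
    (h2 : 2 ≤ U.card) (hm : m ∉ U) (hUV : U ⊆ Vt)
    (w : (Fin N → ℝ) × (Fin N → ℝ) × (Fin N → ℝ))
    (h1 : ∀ j, j ≠ m → w.1 j = 0)
    (hb0 : ∀ j, j ∉ Vt → w.2.1 j = 0)
    (hu0 : ∀ j, j ∉ U → w.2.2 j = 0)
    (h4 : ∀ j ∈ Vt, w.2.1 j + ∑ k, w.1 k = 1)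
    (h5 : ∑ j, w.2.2 j = 1)
    (h6 : ∀ j ∈ U, w.1 j + w.2.2 j + w.2.1 j = 1) :
    w = vPoint N m U Vt := by
  have hcne : (U.card : ℝ) ≠ 0 := by
    have : 0 < U.card := by omega
    exact_mod_cast this.ne'
  set S := ∑ k, w.1 k with hSdef
  have hSm : S = w.1 m := by
    rw [hSdef]
    exact Finset.sum_eq_single m (fun k _ hk => h1 k hk) (by simp)
  have hbV : ∀ j ∈ Vt, w.2.1 j = 1 - S := fun j hj => by linarith [h4 j hj]
  have huU : ∀ j ∈ U, w.2.2 j = S := by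
    intro j hj
    have hjm : j ≠ m := fun e => hm (e ▸ hj)
    have e1 := h1 j hjm
    have e2 := hbV j (hUV hj)
    have e3 := h6 j hj
    linarith
  have hsum : ∑ j, w.2.2 j = (U.card : ℝ) * S := by
    rw [← Finset.sum_subset (Finset.subset_univ U) (fun x _ hx => hu0 x hx),
      Finset.sum_congr rfl huU, Finset.sum_const, nsmul_eq_mul]
  have hSr : S = (U.card : ℝ)⁻¹ := by
    have hmul : (U.card : ℝ) * S = 1 := by rw [← hsum, h5]
    field_simp
    linarith
  ext j
  · simp only [vPoint]
    split_ifs with hj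
    · rw [hj, ← hSm, hSr]
    · exact h1 j hj
  · simp only [vPoint]
    split_ifs with hj
    · rw [hbV j hj, hSr]
    · exact hb0 j hj
  · simp only [vPoint]
    split_ifs with hj
    · rw [huU j hj, hSr]
    · exact hu0 j hj

/-- For any `U ⊆ [N]` with `2 ≤ |U| ≤ N - 1`, any `m ∉ U` and any `V ⊇ U`, the
point `v(m, U, V)` is an extreme point of `QSTAB(G)` for the `2 × N`
unicasts-and-broadcast conflict graph. -/
theorem stmt18 (N : ℕ) (U Vt : Finset (Fin N)) (m : Fin N)
    (h2 : 2 ≤ U.card) (hle : U.card ≤ N - 1) (hm : m ∉ U) (hUV : U ⊆ Vt) :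
    vPoint N m U Vt ∈ (Q2N N).extremePoints ℝ := by
  have hcR : (2 : ℝ) ≤ (U.card : ℝ) := by exact_mod_cast h2
  have hcne : (U.card : ℝ) ≠ 0 := by linarith
  set r : ℝ := (U.card : ℝ)⁻¹ with hrdef
  have hr0 : 0 < r := by rw [hrdef]; positivity
  have hr1 : r ≤ 1 := by
    rw [hrdef]
    exact inv_le_one_of_one_le₀ (by linarith)
  have hmul : (U.card : ℝ) * r = 1 := mul_inv_cancel₀ hcne
  have hSx : ∑ k, (vPoint N m U Vt).1 k = r := by
    simp [vPoint, Finset.sum_ite_eq', hrdef]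
  have hTx : ∑ k, (vPoint N m U Vt).2.2 k = 1 := by
    show (∑ k, if k ∈ U then r else 0) = 1
    rw [Finset.sum_ite_mem, Finset.univ_inter, Finset.sum_const, nsmul_eq_mul, hmul]
  have hxmem : vPoint N m U Vt ∈ Q2N N := by
    refine ⟨?_, ?_, ?_, ?_, ?_, ?_⟩
    · intro j; simp only [vPoint]; split_ifs <;> linarith
    · intro j; simp only [vPoint]; split_ifs <;> linarith
    · intro j; simp only [vPoint]; split_ifs <;> linarith
    · intro j
      rw [hSx]
      show (if j ∈ Vt then 1 - r else 0) + r ≤ 1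
      split_ifs <;> linarith
    · rw [hTx]
    · intro j
      show (if j = m then r else 0) + (if j ∈ U then r else 0) +
        (if j ∈ Vt then 1 - r else 0) ≤ 1
      split_ifs with e1 e2 e3 <;> try linarith
      all_goals exact absurd (e1 ▸ e2) hm
  rw [mem_extremePoints]
  refine ⟨hxmem, fun y hy z hz hseg => ?_⟩
  obtain ⟨a, b, ha, hb, hab, hxyz⟩ := hseg
  have e1 : ∀ j, a * y.1 j + b * z.1 j = (vPoint N m U Vt).1 j := by
    intro j
    have := congrFun (congrArg Prod.fst hxyz) j
    simpa using this
  have e2 : ∀ j, a * y.2.1 j + b * z.2.1 j = (vPoint N m U Vt).2.1 j := by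
    intro j
    have := congrFun (congrArg (fun p => p.2.1) hxyz) j
    simpa using this
  have e3 : ∀ j, a * y.2.2 j + b * z.2.2 j = (vPoint N m U Vt).2.2 j := by
    intro j
    have := congrFun (congrArg (fun p => p.2.2) hxyz) j
    simpa using this
  have eS : a * (∑ k, y.1 k) + b * (∑ k, z.1 k) = r := by
    rw [Finset.mul_sum, Finset.mul_sum, ← Finset.sum_add_distrib,
      Finset.sum_congr rfl fun k _ => e1 k, hSx]
  have eT : a * (∑ k, y.2.2 k) + b * (∑ k, z.2.2 k) = 1 := by
    rw [Finset.mul_sum, Finset.mul_sum, ← Finset.sum_add_distrib,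
      Finset.sum_congr rfl fun k _ => e3 k, hTx]
  obtain ⟨hy1, hyb, hy2, hy4, hy5, hy6⟩ := hy
  obtain ⟨hz1, hzb, hz2, hz4, hz5, hz6⟩ := hz
  -- tight nonnegativity constraints
  have t1 : ∀ j, j ≠ m → y.1 j = 0 ∧ z.1 j = 0 := by
    intro j hj
    refine comb_ge a b _ _ 0 ha hb hab (hy1 j) (hz1 j) ?_
    rw [e1 j]; simp [vPoint, hj]
  have tb : ∀ j, j ∉ Vt → y.2.1 j = 0 ∧ z.2.1 j = 0 := by
    intro j hj
    refine comb_ge a b _ _ 0 ha hb hab (hyb j) (hzb j) ?_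
    rw [e2 j]; simp [vPoint, hj]
  have t2 : ∀ j, j ∉ U → y.2.2 j = 0 ∧ z.2.2 j = 0 := by
    intro j hj
    refine comb_ge a b _ _ 0 ha hb hab (hy2 j) (hz2 j) ?_
    rw [e3 j]; simp [vPoint, hj]
  -- tight clique constraints
  have t4 : ∀ j ∈ Vt, (y.2.1 j + ∑ k, y.1 k = 1) ∧ (z.2.1 j + ∑ k, z.1 k = 1) := by
    intro j hj
    refine comb_le a b _ _ 1 ha hb hab (hy4 j) (hz4 j) ?_
    have h2j : (vPoint N m U Vt).2.1 j = 1 - r := by simp [vPoint, hj, hrdef]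
    have := e2 j
    rw [h2j] at this
    nlinarith [eS]
  have t5 : (∑ j, y.2.2 j = 1) ∧ (∑ j, z.2.2 j = 1) :=
    comb_le a b _ _ 1 ha hb hab hy5 hz5 eT
  have t6 : ∀ j ∈ U, (y.1 j + y.2.2 j + y.2.1 j = 1) ∧
      (z.1 j + z.2.2 j + z.2.1 j = 1) := by
    intro j hj
    refine comb_le a b _ _ 1 ha hb hab (hy6 j) (hz6 j) ?_
    have hjm : j ≠ m := fun e => hm (e ▸ hj)
    have g1 := e1 j; have g2 := e2 j; have g3 := e3 j
    have v1 : (vPoint N m U Vt).1 j = 0 := by simp [vPoint, hjm]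
    have v2 : (vPoint N m U Vt).2.1 j = 1 - r := by simp [vPoint, hUV hj, hrdef]
    have v3 : (vPoint N m U Vt).2.2 j = r := by simp [vPoint, hj, hrdef]
    rw [v1] at g1; rw [v2] at g2; rw [v3] at g3
    nlinarith
  constructor
  · exact key_unique N U Vt m h2 hm hUV y (fun j hj => (t1 j hj).1)
      (fun j hj => (tb j hj).1) (fun j hj => (t2 j hj).1)
      (fun j hj => (t4 j hj).1) t5.1 (fun j hj => (t6 j hj).1)
  · exact key_unique N U Vt m h2 hm hUV z (fun j hj => (t1 j hj).2)
      (fun j hj => (tb j hj).2) (fun j hj => (t2 j hj).2)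
      (fun j hj => (t4 j hj).2) t5.2 (fun j hj => (t6 j hj).2)
end
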